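/- arXiv:1401.0424 — 8 statements merged into one kernel-verified Lean document; each statement's English description precedes it below -/
import Mathlib

section
/- Let k ∈ ℕ and let G be a k-connected graph. Suppose A ⊆ V(G) with |A| ≥ k and |V(G)\A| ≥ k. Then there is a matching of size k in G between A and V(G)\A. -/
open Finset

/-- If `G` is `k`-connected (it has more than `k` vertices and deleting any fewer than
`k` vertices leaves it connected) and `A ⊆ V(G)` has `|A| ≥ k` and `|V(G)\A| ≥ k`,
then there is a matching of size `k` between `A` and `V(G)\A`: a set of `k` pairwise
vertex-disjoint edges, each with one endpoint in `A` and the other outside `A`. -/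
theorem stmt6 {V : Type*} [Fintype V] [DecidableEq V] (k : ℕ) (G : SimpleGraph V)
    (hcard : k < Fintype.card V)
    (hconn : ∀ S : Finset V, S.card < k → (G.induce ((↑S : Set V)ᶜ)).Connected)
    (A : Finset V) (hA : k ≤ A.card) (hAc : k ≤ Aᶜ.card) :
    ∃ M : Finset (V × V), M.card = k ∧
      (∀ p ∈ M, G.Adj p.1 p.2 ∧ p.1 ∈ A ∧ p.2 ∉ A) ∧
      (∀ p ∈ M, ∀ q ∈ M, p ≠ q →
        p.1 ≠ q.1 ∧ p.1 ≠ q.2 ∧ p.2 ≠ q.1 ∧ p.2 ≠ q.2) := by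
  classical
  have hVne : Nonempty V := Fintype.card_pos_iff.mp (by omega)
  have : Inhabited V := Classical.inhabited_of_nonempty hVne
  set d := A.card - k with hd
  set nbr : V → Finset V := fun a => G.neighborFinset a ∩ Aᶜ with hnbr
  set r : {x : V // x ∈ A} → Finset (V ⊕ Fin d) :=
    fun a => (nbr a.1).image Sum.inl ∪ (Finset.univ : Finset (Fin d)).image Sum.inr with hr
  by_cases hHall : ∀ s : Finset {x : V // x ∈ A}, s.card ≤ (s.biUnion r).card
  · -- Hall's condition holds: extract a matching of size k
    obtain ⟨f, hfinj, hfr⟩ := (Finset.all_card_le_biUnion_card_iff_exists_injective r).mp hHall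
    set S : Finset {x : V // x ∈ A} := Finset.univ.filter (fun a => (f a).isLeft) with hS
    have hkey : ∀ a ∈ S, ∃ b ∈ nbr a.1, f a = Sum.inl b := by
      intro a ha
      have h1 := hfr a
      rw [hr] at h1
      rcases Finset.mem_union.mp h1 with h2 | h2
      · obtain ⟨b, hb, hfb⟩ := Finset.mem_image.mp h2
        exact ⟨b, hb, hfb.symm⟩
      · obtain ⟨j, _, hfj⟩ := Finset.mem_image.mp h2
        rw [hS] at ha
        simp only [Finset.mem_filter] at ha
        rw [← hfj] at ha
        simp at ha
    -- the non-left part has cardinality at most d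
    have h1 : (Finset.univ.filter (fun a : {x : V // x ∈ A} => ¬ (f a).isLeft)).card ≤ d := by
      calc (Finset.univ.filter (fun a : {x : V // x ∈ A} => ¬ (f a).isLeft)).card
          = ((Finset.univ.filter (fun a : {x : V // x ∈ A} => ¬ (f a).isLeft)).image f).card :=
            (Finset.card_image_of_injective _ hfinj).symm
        _ ≤ ((Finset.univ : Finset (Fin d)).image Sum.inr).card := by
            apply Finset.card_le_card
            intro x hx
            obtain ⟨a, ha, hfa⟩ := Finset.mem_image.mp hx
            simp only [Finset.mem_filter] at ha
            rcases h : f a with b | j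
            · rw [h] at ha; simp at ha
            · rw [h] at hfa
              exact Finset.mem_image.mpr ⟨j, Finset.mem_univ j, hfa⟩
        _ ≤ d := Finset.card_image_le.trans (by simp)
    have hScard : k ≤ S.card := by
      have h2 := Finset.card_filter_add_card_filter_not
        (s := (Finset.univ : Finset {x : V // x ∈ A})) (p := fun a => (f a).isLeft)
      have h3 : (Finset.univ : Finset {x : V // x ∈ A}).card = A.card := by
        simp [Fintype.card_coe]
      rw [← hS] at h2
      omega
    obtain ⟨S', hS'sub, hS'card⟩ := Finset.exists_subset_card_eq hScard
    set e : {x : V // x ∈ A} → V × V := fun a => (a.1, ((f a).getLeft?).getD default) with he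
    have heval : ∀ a ∈ S, ∀ b, f a = Sum.inl b → e a = (a.1, b) := by
      intro a _ b hb
      simp [he, hb]
    refine ⟨S'.image e, ?_, ?_, ?_⟩
    · rw [Finset.card_image_of_injOn, hS'card]
      intro a _ a' _ h
      have : a.1 = a'.1 := congrArg Prod.fst h
      exact Subtype.ext this
    · intro p hp
      obtain ⟨a, ha, hpa⟩ := Finset.mem_image.mp hp
      obtain ⟨b, hb, hfb⟩ := hkey a (hS'sub ha)
      rw [heval a (hS'sub ha) b hfb] at hpa
      subst hpa
      simp only [hnbr, Finset.mem_inter, SimpleGraph.mem_neighborFinset,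
        Finset.mem_compl] at hb
      exact ⟨hb.1, a.2, hb.2⟩
    · intro p hp q hq hpq
      obtain ⟨a, ha, hpa⟩ := Finset.mem_image.mp hp
      obtain ⟨a', ha', hqa⟩ := Finset.mem_image.mp hq
      obtain ⟨b, hb, hfb⟩ := hkey a (hS'sub ha)
      obtain ⟨b', hb', hfb'⟩ := hkey a' (hS'sub ha')
      rw [heval a (hS'sub ha) b hfb] at hpa
      rw [heval a' (hS'sub ha') b' hfb'] at hqa
      subst hpa; subst hqa
      have hbA : b ∉ A := by
        simp only [hnbr, Finset.mem_inter, Finset.mem_compl] at hb; exact hb.2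
      have hb'A : b' ∉ A := by
        simp only [hnbr, Finset.mem_inter, Finset.mem_compl] at hb'; exact hb'.2
      have haa' : a ≠ a' := by
        intro h
        subst h
        rw [hfb] at hfb'
        injection hfb' with hbb
        exact hpq (by rw [hbb])
      refine ⟨?_, ?_, ?_, ?_⟩
      · intro h; exact haa' (Subtype.ext (show (a : V) = a' from h))
      · intro h; exact hb'A ((show (a : V) = b' from h) ▸ a.2)
      · intro h; exact hbA ((show (a' : V) = b from h.symm) ▸ a'.2)
      · intro h
        have h' : b = b' := h
        apply haa'
        apply hfinj
        rw [hfb, hfb', h']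
  · -- Hall's condition fails: build a small cut set, contradicting connectivity
    exfalso
    push_neg at hHall
    obtain ⟨s, hs⟩ := hHall
    have hsne : s.Nonempty := by
      rcases Finset.eq_empty_or_nonempty s with h | h
      · rw [h] at hs; simp at hs
      · exact h
    obtain ⟨a₀, ha₀⟩ := hsne
    set T : Finset V := s.image Subtype.val with hT
    have hTcard : T.card = s.card := Finset.card_image_of_injective _ Subtype.val_injective
    have hTA : T ⊆ A := by
      intro x hx
      obtain ⟨a, _, rfl⟩ := Finset.mem_image.mp hx
      exact a.2
    set NT : Finset V := T.biUnion nbr with hNT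
    have hbiU : s.biUnion r = NT.image Sum.inl ∪ (Finset.univ : Finset (Fin d)).image Sum.inr := by
      apply Finset.Subset.antisymm
      · intro x hx
        obtain ⟨a, ha, hxa⟩ := Finset.mem_biUnion.mp hx
        rw [hr] at hxa
        rcases Finset.mem_union.mp hxa with h2 | h2
        · obtain ⟨b, hb, rfl⟩ := Finset.mem_image.mp h2
          apply Finset.mem_union_left
          apply Finset.mem_image.mpr
          refine ⟨b, ?_, rfl⟩
          exact Finset.mem_biUnion.mpr ⟨a.1, Finset.mem_image.mpr ⟨a, ha, rfl⟩, hb⟩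
        · exact Finset.mem_union_right _ h2
      · intro x hx
        rcases Finset.mem_union.mp hx with h2 | h2
        · obtain ⟨b, hb, rfl⟩ := Finset.mem_image.mp h2
          obtain ⟨t, ht, hbt⟩ := Finset.mem_biUnion.mp hb
          obtain ⟨a, ha, rfl⟩ := Finset.mem_image.mp ht
          refine Finset.mem_biUnion.mpr ⟨a, ha, ?_⟩
          rw [hr]
          exact Finset.mem_union_left _ (Finset.mem_image.mpr ⟨b, hbt, rfl⟩)
        · refine Finset.mem_biUnion.mpr ⟨a₀, ha₀, ?_⟩
          rw [hr]
          exact Finset.mem_union_right _ h2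
    have hbiUcard : (s.biUnion r).card = NT.card + d := by
      rw [hbiU, Finset.card_union_of_disjoint, Finset.card_image_of_injective _ Sum.inl_injective,
        Finset.card_image_of_injective _ Sum.inr_injective, Finset.card_univ, Fintype.card_fin]
      simp [Finset.disjoint_left]
    have hmain : NT.card + d < T.card := by rw [hTcard]; omega
    set C : Finset V := NT ∪ (A \ T) with hC
    have hCcard : C.card < k := by
      have h1 : C.card ≤ NT.card + (A \ T).card := Finset.card_union_le _ _
      have h2 : (A \ T).card = A.card - T.card := Finset.card_sdiff_of_subset hTA
      have h3 : T.card ≤ A.card := Finset.card_le_card hTA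
      omega
    have hNTA : NT ⊆ Aᶜ := by
      intro x hx
      obtain ⟨t, _, hxt⟩ := Finset.mem_biUnion.mp hx
      simp only [hnbr, Finset.mem_inter] at hxt
      exact hxt.2
    -- pick t ∈ T not in C
    have ht0 : a₀.1 ∈ T := Finset.mem_image.mpr ⟨a₀, ha₀, rfl⟩
    have htC : a₀.1 ∉ C := by
      rw [hC]
      simp only [Finset.mem_union, Finset.mem_sdiff, not_or]
      constructor
      · intro h; exact (Finset.mem_compl.mp (hNTA h)) a₀.2
      · intro h; exact h.2 ht0
    -- pick b ∈ Aᶜ \ NT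
    have hNTcard : NT.card < Aᶜ.card := by
      have h3 : T.card ≤ A.card := Finset.card_le_card hTA
      omega
    obtain ⟨b, hbAc, hbNT⟩ : ∃ b ∈ Aᶜ, b ∉ NT := by
      by_contra h
      push_neg at h
      exact absurd (Finset.card_le_card h) (by omega)
    have hbC : b ∉ C := by
      rw [hC]
      simp only [Finset.mem_union, Finset.mem_sdiff, not_or]
      exact ⟨hbNT, fun h => (Finset.mem_compl.mp hbAc) h.1⟩
    have hcon := hconn C hCcard
    have hmem : ∀ x : V, x ∉ C → x ∈ ((↑C : Set V)ᶜ : Set V) := by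
      intro x hx
      simp [hx]
    -- no edge of the induced graph crosses from A to Aᶜ
    have step : ∀ (x y : ((↑C : Set V)ᶜ : Set V)),
        (G.induce ((↑C : Set V)ᶜ)).Adj x y → x.1 ∈ A → y.1 ∈ A := by
      intro x y hxy hxA
      by_contra hyA
      have hxC : x.1 ∉ C := by
        have h2 := x.2
        simp only [Set.mem_compl_iff, Finset.mem_coe] at h2
        exact h2
      have hyC : y.1 ∉ C := by
        have h2 := y.2
        simp only [Set.mem_compl_iff, Finset.mem_coe] at h2
        exact h2
      have hxT : x.1 ∈ T := by
        have hnd : x.1 ∉ A \ T := fun h => hxC (Finset.mem_union_right _ h)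
        by_contra hxT
        exact hnd (Finset.mem_sdiff.mpr ⟨hxA, hxT⟩)
      have hadj : G.Adj x.1 y.1 := hxy
      have : y.1 ∈ NT := by
        refine Finset.mem_biUnion.mpr ⟨x.1, hxT, ?_⟩
        simp only [hnbr, Finset.mem_inter, SimpleGraph.mem_neighborFinset, Finset.mem_compl]
        exact ⟨hadj, hyA⟩
      exact hyC (Finset.mem_union_left _ this)
    have hwalk : ∀ (x y : ((↑C : Set V)ᶜ : Set V)),
        (G.induce ((↑C : Set V)ᶜ)).Walk x y → x.1 ∈ A → y.1 ∈ A := by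
      intro x y w
      induction w with
      | nil => exact id
      | cons h p ih => intro hx; exact ih (step _ _ h hx)
    obtain ⟨w⟩ := hcon.preconnected ⟨a₀.1, hmem _ htC⟩ ⟨b, hmem _ hbC⟩
    exact (Finset.mem_compl.mp hbAc) (hwalk _ _ w a₀.2)
end

section
/- Let 0 < ν ≤ τ ≤ ε < 1 with ε ≥ 2ν/τ. Let G be a graph on n vertices with minimum degree δ(G) ≥ (1/2 + ε)n. Then G is a robust (ν,τ)-expander: for every S ⊆ V(G) with τn ≤ |S| ≤ (1-τ)n, the set RN_{ν}(S) of vertices with at least νn neighbours in S satisfies |RN_ν(S)| ≥ |S| + νn. -/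
open Finset

/-- Let `0 < ν ≤ τ ≤ ε < 1` with `ε ≥ 2ν/τ`.  If `G` is a graph on `n` vertices with
minimum degree at least `(1/2 + ε)n`, then `G` is a robust `(ν,τ)`-expander: every
`S ⊆ V(G)` with `τn ≤ |S| ≤ (1-τ)n` satisfies `|RN_ν(S)| ≥ |S| + νn`, where
`RN_ν(S)` is the set of vertices with at least `νn` neighbours in `S`. -/
theorem stmt7 {V : Type*} [Fintype V] [DecidableEq V] (G : SimpleGraph V)
    [DecidableRel G.Adj] (ν τ ε : ℝ)
    (hν : 0 < ν) (hντ : ν ≤ τ) (hτε : τ ≤ ε) (hε : ε < 1) (hbig : 2 * ν / τ ≤ ε)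
    (hδ : ∀ v : V, (1/2 + ε) * (Fintype.card V : ℝ) ≤ (G.degree v : ℝ)) :
    ∀ S : Finset V, τ * (Fintype.card V : ℝ) ≤ S.card →
      (S.card : ℝ) ≤ (1 - τ) * (Fintype.card V : ℝ) →
      (S.card : ℝ) + ν * (Fintype.card V : ℝ) ≤
        ((Finset.univ.filter fun v =>
          ν * (Fintype.card V : ℝ) ≤ ((G.neighborFinset v ∩ S).card : ℝ)).card : ℝ) := by
  intro S hS1 hS2
  have hτ : 0 < τ := lt_of_lt_of_le hν hντ
  have h2ν : 2 * ν ≤ ε * τ := by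
    have := (div_le_iff₀ hτ).mp hbig
    linarith
  have hε0 : 0 < ε := lt_of_lt_of_le hν (le_trans hντ hτε)
  have hτ1 : τ ≤ 1 := le_of_lt (lt_of_le_of_lt hτε hε)
  set n : ℝ := (Fintype.card V : ℝ) with hn
  have hn0 : 0 ≤ n := by positivity
  rcases Nat.eq_zero_or_pos (Fintype.card V) with h0 | hpos
  · have hs0 : S = ∅ := by
      have := Finset.card_le_univ S
      rw [h0, Nat.le_zero, Finset.card_eq_zero] at this
      exact this
    have hn' : n = 0 := by simp [hn, h0]
    simp [hs0, hn']
  have hnpos : 0 < n := by rw [hn]; exact_mod_cast hpos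
  -- double counting, natural number version
  have key : ∑ v : V, ((G.neighborFinset v) ∩ S).card = ∑ s ∈ S, G.degree s := by
    have h1 : ∀ v : V, (G.neighborFinset v) ∩ S = S.filter (fun s => G.Adj v s) := by
      intro v; ext s; simp [and_comm]
    have h2 : ∀ s : V, (Finset.univ.filter fun v => G.Adj v s).card = G.degree s := by
      intro s
      rw [SimpleGraph.degree, SimpleGraph.neighborFinset_eq_filter]
      congr 1
      ext v
      simp [G.adj_comm]
    simp_rw [h1, Finset.card_filter]
    rw [Finset.sum_comm]
    exact Finset.sum_congr rfl fun s _ => by rw [← Finset.card_filter, h2]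
  have hcount : ∑ v : V, (((G.neighborFinset v) ∩ S).card : ℝ) = ∑ s ∈ S, (G.degree s : ℝ) := by
    exact_mod_cast congrArg (fun k : ℕ => (k : ℝ)) key
  have hlower : (S.card : ℝ) * ((1/2 + ε) * n) ≤ ∑ v : V, (((G.neighborFinset v) ∩ S).card : ℝ) := by
    rw [hcount]
    calc (S.card : ℝ) * ((1/2 + ε) * n) = ∑ _s ∈ S, (1/2 + ε) * n := by
          rw [Finset.sum_const, nsmul_eq_mul]
      _ ≤ ∑ s ∈ S, (G.degree s : ℝ) := Finset.sum_le_sum fun s _ => hδ s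
  set RN := Finset.univ.filter fun v =>
      ν * n ≤ ((G.neighborFinset v ∩ S).card : ℝ) with hRN
  by_cases hcase : (1/2 - ε + ν) * n ≤ (S.card : ℝ)
  · -- every vertex is in RN
    have hall : RN = Finset.univ := by
      apply Finset.eq_univ_of_forall
      intro v
      rw [hRN, Finset.mem_filter]
      refine ⟨Finset.mem_univ v, ?_⟩
      have hiu := Finset.card_inter_add_card_union (G.neighborFinset v) S
      have hub : ((G.neighborFinset v ∪ S).card : ℝ) ≤ n := by
        rw [hn]; exact_mod_cast Finset.card_le_univ _
      have hdeg := hδ v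
      have heq : ((G.neighborFinset v ∩ S).card : ℝ) + ((G.neighborFinset v ∪ S).card : ℝ)
          = (G.degree v : ℝ) + (S.card : ℝ) := by
        rw [SimpleGraph.degree]
        exact_mod_cast congrArg (fun k : ℕ => (k : ℝ)) hiu
      linarith
    rw [hall, Finset.card_univ, ← hn]
    linarith [mul_le_mul_of_nonneg_right hντ hn0]
  -- case 2
  push_neg at hcase
  by_contra hcon
  push_neg at hcon
  have hupper : ∑ v : V, (((G.neighborFinset v) ∩ S).card : ℝ)
      ≤ (RN.card : ℝ) * (S.card : ℝ) + n * (ν * n) := by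
    rw [← Finset.sum_filter_add_sum_filter_not Finset.univ
      (fun v => ν * n ≤ ((G.neighborFinset v ∩ S).card : ℝ))]
    refine add_le_add ?_ ?_
    · calc ∑ v ∈ RN, (((G.neighborFinset v) ∩ S).card : ℝ)
          ≤ ∑ _v ∈ RN, (S.card : ℝ) := by
            apply Finset.sum_le_sum
            intro v _
            exact_mod_cast Finset.card_le_card (Finset.inter_subset_right)
        _ = (RN.card : ℝ) * (S.card : ℝ) := by rw [Finset.sum_const, nsmul_eq_mul]
    · calc ∑ v ∈ Finset.univ.filter (fun v => ¬ ν * n ≤ ((G.neighborFinset v ∩ S).card : ℝ)),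
            (((G.neighborFinset v) ∩ S).card : ℝ)
          ≤ ∑ _v ∈ Finset.univ.filter (fun v => ¬ ν * n ≤ ((G.neighborFinset v ∩ S).card : ℝ)),
            (ν * n) := by
            apply Finset.sum_le_sum
            intro v hv
            rw [Finset.mem_filter] at hv
            exact le_of_not_ge hv.2
        _ = ((Finset.univ.filter (fun v => ¬ ν * n ≤ ((G.neighborFinset v ∩ S).card : ℝ))).card : ℝ)
            * (ν * n) := by rw [Finset.sum_const, nsmul_eq_mul]
        _ ≤ n * (ν * n) := by
            have hc : ((Finset.univ.filter (fun v => ¬ ν * n ≤ ((G.neighborFinset v ∩ S).card : ℝ))).card : ℝ) ≤ n := by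
              rw [hn]; exact_mod_cast Finset.card_le_univ _
            have : 0 ≤ ν * n := by positivity
            exact mul_le_mul_of_nonneg_right hc this
  have hspos : 0 < (S.card : ℝ) := lt_of_lt_of_le (by positivity) hS1
  have hA : (S.card : ℝ) * ((1/2 + ε) * n) ≤ (RN.card : ℝ) * (S.card : ℝ) + n * (ν * n) :=
    le_trans hlower hupper
  have hB : (RN.card : ℝ) * (S.card : ℝ) < ((S.card : ℝ) + ν * n) * (S.card : ℝ) :=
    mul_lt_mul_of_pos_right hcon hspos
  have hD : (S.card : ℝ) * (S.card : ℝ) < (S.card : ℝ) * ((1/2 - ε + ν) * n) :=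
    mul_lt_mul_of_pos_left hcase hspos
  have hC : ν * n * n ≤ ε / 2 * ((S.card : ℝ) * n) := by
    nlinarith [mul_le_mul_of_nonneg_right hS1 hn0,
      mul_nonneg (sub_nonneg.mpr h2ν) (mul_nonneg hn0 hn0)]
  have h4 : 2 * ν ≤ ε := by nlinarith
  nlinarith [hA, hB, hD, hC, mul_pos hspos hnpos, h4]
end

section
/- Let 0 < 1/n ≪ ν ≪ τ ≪ η ≤ 1. Suppose G is a digraph on n vertices that is a robust (ν,τ)-outexpander with minimum semidegree δ⁰(G) ≥ ηn. Then for any two distinct vertices x, y there is a directed path from x to y in G with at most 1/ν vertices. -/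
open Finset

/-- A non-nodup list decomposes around a repeated element. -/
lemma exists_dup_decomp {α : Type} {l : List α} (h : ¬ l.Nodup) :
    ∃ (p : List α) (a : α) (q r : List α), l = p ++ a :: (q ++ a :: r) := by
  induction l with
  | nil => simp at h
  | cons b t ih =>
    rw [List.nodup_cons] at h
    push_neg at h
    by_cases hb : b ∈ t
    · obtain ⟨q, r, rfl⟩ := List.append_of_mem hb
      exact ⟨[], b, q, r, rfl⟩
    · obtain ⟨p, a, q, r, rfl⟩ := ih (h hb)
      exact ⟨b :: p, a, q, r, rfl⟩

/-- Shortcutting a walk to a path. -/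
lemma shortcut {α : Type} {r : α → α → Prop} :
    ∀ (N : ℕ) (l : List α), l.length ≤ N → l.Chain' r →
      ∃ m : List α, m.Nodup ∧ m.Chain' r ∧ m.head? = l.head? ∧
        m.getLast? = l.getLast? ∧ m.length ≤ l.length := by
  intro N
  induction N with
  | zero =>
    intro l hl _
    rw [Nat.le_zero, List.length_eq_zero_iff] at hl
    subst hl
    exact ⟨[], by simp [List.Chain']⟩
  | succ N ih =>
    intro l hl hc
    by_cases hnd : l.Nodup
    · exact ⟨l, hnd, hc, rfl, rfl, le_rfl⟩
    obtain ⟨p, a, q, r', rfl⟩ := exists_dup_decomp hnd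
    have hre : p ++ a :: (q ++ a :: r') = p ++ ((a :: q) ++ (a :: r')) := by simp
    rw [hre] at hc
    change List.IsChain r _ at hc
    rw [List.isChain_append] at hc
    obtain ⟨hcp, hc2, hcross⟩ := hc
    rw [List.isChain_append] at hc2
    obtain ⟨hcq, hcr, _⟩ := hc2
    -- new list
    have hcm : (p ++ a :: r').Chain' r := by
      change List.IsChain r _
      rw [List.isChain_append]
      exact ⟨hcp, hcr, by simpa using hcross⟩
    have hlen : (p ++ a :: r').length ≤ N := by
      simp only [List.length_append, List.length_cons] at hl ⊢
      omega
    obtain ⟨m, hm1, hm2, hm3, hm4, hm5⟩ := ih (p ++ a :: r') hlen hcm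
    refine ⟨m, hm1, hm2, ?_, ?_, ?_⟩
    · rw [hm3]
      cases p <;> simp
    · rw [hm4, List.getLast?_append_cons, show a :: (q ++ a :: r') = (a :: q) ++ (a :: r') by simp,
        ← List.append_assoc, List.getLast?_append_cons]
    · refine hm5.trans ?_
      simp only [List.length_append, List.length_cons]
      omega

/-- Let `0 < 1/n ≪ ν ≪ τ ≪ η ≤ 1`.  If `G` is a robust `(ν,τ)`-outexpander on `n`
vertices with minimum semidegree `δ⁰(G) ≥ ηn`, then any two distinct vertices `x, y`
are joined by a directed path from `x` to `y` with at most `1/ν` vertices.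
The hierarchy is formalised by nested existential quantifiers. -/
theorem stmt9 :
    ∀ η : ℝ, 0 < η → η ≤ 1 →
    ∃ τ₀ : ℝ, 0 < τ₀ ∧ ∀ τ : ℝ, 0 < τ → τ ≤ τ₀ →
    ∃ ν₀ : ℝ, 0 < ν₀ ∧ ∀ ν : ℝ, 0 < ν → ν ≤ ν₀ →
    ∃ n₀ : ℕ, ∀ n : ℕ, n₀ ≤ n →
    ∀ (V : Type) [Fintype V] [DecidableEq V] (Adj : V → V → Prop) [DecidableRel Adj],
      Fintype.card V = n →
      -- robust (ν,τ)-outexpander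
      (∀ S : Finset V, τ * (n : ℝ) ≤ S.card → (S.card : ℝ) ≤ (1 - τ) * n →
        (S.card : ℝ) + ν * n ≤
          ((Finset.univ.filter fun v : V =>
            ν * (n : ℝ) ≤ ((S.filter fun u => Adj u v).card : ℝ)).card : ℝ)) →
      -- minimum semidegree at least ηn
      (∀ v : V, η * (n : ℝ) ≤ ((Finset.univ.filter fun u => Adj v u).card : ℝ) ∧
        η * (n : ℝ) ≤ ((Finset.univ.filter fun u => Adj u v).card : ℝ)) →
      ∀ x y : V, x ≠ y →
        ∃ l : List V, l ≠ [] ∧ l.Nodup ∧ l.Chain' Adj ∧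
          l.head? = some x ∧ l.getLast? = some y ∧ (l.length : ℝ) ≤ 1 / ν := by
  intro η hη hη1
  refine ⟨η/2, by positivity, fun τ hτ hτη => ?_⟩
  refine ⟨η/4, by positivity, fun ν hν hνη => ?_⟩
  refine ⟨1, fun n hn V _ _ Adj _ hcard hexp hdeg x y hxy => ?_⟩
  classical
  have hn1 : (1:ℝ) ≤ n := by exact_mod_cast hn
  have hn0 : (0:ℝ) ≤ n := by linarith
  set RN : Finset V → Finset V := fun S => univ.filter fun v : V =>
      ν * (n:ℝ) ≤ ((S.filter fun u => Adj u v).card : ℝ) with hRN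
  set R : ℕ → Finset V := fun i =>
    Nat.rec ({x} ∪ univ.filter fun u => Adj x u) (fun _ Ri => Ri ∪ RN Ri) i with hRdef
  have hR0 : R 0 = {x} ∪ univ.filter (fun u => Adj x u) := rfl
  have hRS : ∀ i, R (i+1) = R i ∪ RN (R i) := fun i => rfl
  -- walks into R i
  have hwalk : ∀ i, ∀ v ∈ R i, ∃ l : List V, l.Chain' Adj ∧ l.head? = some x ∧
      l.getLast? = some v ∧ l.length ≤ i + 2 := by
    intro i
    induction i with
    | zero =>
      intro v hv
      rw [hR0, mem_union] at hv
      rcases hv with hv | hv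
      · have hv' : v = x := mem_singleton.mp hv
        refine ⟨[x], List.isChain_singleton x, rfl, ?_, by simp⟩
        rw [hv']
        simp
      · rw [mem_filter] at hv
        refine ⟨[x, v], List.isChain_pair.2 hv.2, rfl, rfl, ?_⟩
        simp
    | succ i ih =>
      intro v hv
      rw [hRS, mem_union] at hv
      rcases hv with hv | hv
      · obtain ⟨l, h1, h2, h3, h4⟩ := ih v hv
        exact ⟨l, h1, h2, h3, by omega⟩
      · rw [hRN, mem_filter] at hv
        have hpos : 0 < ((R i).filter fun u => Adj u v).card := by
          by_contra h
          push_neg at h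
          rw [Nat.le_zero] at h
          rw [h] at hv
          have : 0 < ν * n := by positivity
          simp only [Nat.cast_zero] at hv
          linarith [hv.2]
        obtain ⟨u, hu⟩ := card_pos.mp hpos
        rw [mem_filter] at hu
        obtain ⟨l, h1, h2, h3, h4⟩ := ih u hu.1
        have hlnil : l ≠ [] := by intro h; rw [h] at h2; simp at h2
        refine ⟨l ++ [v], ?_, ?_, ?_, ?_⟩
        · change List.IsChain Adj _
          rw [List.isChain_append]
          refine ⟨h1, List.isChain_singleton v, fun a ha b hb => ?_⟩
          simp only [List.head?_cons, Option.mem_def, Option.some.injEq] at hb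
          rw [h3] at ha
          simp only [Option.mem_def, Option.some.injEq] at ha
          subst ha; subst hb
          exact hu.2
        · cases l with
          | nil => exact absurd rfl hlnil
          | cons a t => simpa using h2
        · rw [List.getLast?_concat]
        · simp only [List.length_append, List.length_singleton]
          omega
  -- growth
  have hgrow : ∀ i, ((1-τ)*n < ((R i).card:ℝ)) ∨ (η*n + i*(ν*n) ≤ ((R i).card:ℝ)) := by
    intro i
    induction i with
    | zero =>
      right
      have hsub : (univ.filter fun u => Adj x u) ⊆ R 0 := by
        rw [hR0]; exact subset_union_right
      have := (hdeg x).1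
      have hcc : ((univ.filter fun u => Adj x u).card : ℝ) ≤ ((R 0).card : ℝ) := by
        exact_mod_cast card_le_card hsub
      calc η*n + (0:ℕ)*(ν*n) = η*n := by push_cast; ring
      _ ≤ _ := le_trans (hdeg x).1 hcc
    | succ i ih =>
      have hsub : R i ⊆ R (i+1) := by rw [hRS]; exact subset_union_left
      have hmono : ((R i).card:ℝ) ≤ ((R (i+1)).card:ℝ) := by
        exact_mod_cast card_le_card hsub
      rcases ih with h | h
      · left; linarith
      · by_cases hbig : (1-τ)*n < ((R i).card:ℝ)
        · left; linarith
        · right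
          push_neg at hbig
          have hτn : τ * n ≤ ((R i).card:ℝ) := by
            have h1 : τ * n ≤ η * n := by nlinarith
            have h2 : (0:ℝ) ≤ i * (ν*n) := by positivity
            linarith
          have hexpand := hexp (R i) hτn hbig
          have hsub2 : RN (R i) ⊆ R (i+1) := by rw [hRS]; exact subset_union_right
          have hcc : ((RN (R i)).card : ℝ) ≤ ((R (i+1)).card : ℝ) := by
            exact_mod_cast card_le_card hsub2
          rw [hRN] at hcc
          push_cast
          push_cast at h
          nlinarith
  -- K steps suffice
  set K := Nat.ceil ((1-η)/ν) with hK
  have hKν : 1 - η ≤ K * ν := by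
    have := Nat.le_ceil ((1-η)/ν)
    rw [div_le_iff₀ hν] at this
    exact this
  have hRK : (1-τ)*n < ((R K).card : ℝ) := by
    rcases hgrow K with h | h
    · exact h
    · have h1 : (n:ℝ) ≤ η*n + K*(ν*n) := by nlinarith
      nlinarith
  -- hit the in-neighbourhood of y
  have hBcard : η*n ≤ (((univ.filter fun u => Adj u y)).card:ℝ) := (hdeg y).2
  set B := univ.filter fun u : V => Adj u y with hB
  have hU : ((R K ∪ B).card : ℝ) ≤ n := by
    have := card_le_univ (R K ∪ B)
    rw [hcard] at this
    exact_mod_cast this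
  have hI : 0 < (R K ∩ B).card := by
    have hui := Finset.card_union_add_card_inter (R K) B
    have hui' : ((R K ∪ B).card : ℝ) + ((R K ∩ B).card : ℝ)
        = ((R K).card : ℝ) + (B.card : ℝ) := by exact_mod_cast congrArg Nat.cast hui
    have : (0:ℝ) < ((R K ∩ B).card : ℝ) := by nlinarith
    exact_mod_cast this
  obtain ⟨u, hu⟩ := card_pos.mp hI
  rw [mem_inter, hB, mem_filter] at hu
  obtain ⟨l, h1, h2, h3, h4⟩ := hwalk K u hu.1
  have hlnil : l ≠ [] := by intro h; rw [h] at h2; simp at h2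
  -- the walk to y
  have hwc : (l ++ [y]).Chain' Adj := by
    change List.IsChain Adj _
    rw [List.isChain_append]
    refine ⟨h1, List.isChain_singleton y, fun a ha b hb => ?_⟩
    simp only [List.head?_cons, Option.mem_def, Option.some.injEq] at hb
    rw [h3] at ha
    simp only [Option.mem_def, Option.some.injEq] at ha
    subst ha; subst hb
    exact hu.2.2
  obtain ⟨m, hm1, hm2, hm3, hm4, hm5⟩ :=
    shortcut (l ++ [y]).length (l ++ [y]) le_rfl hwc
  have hmh : m.head? = some x := by
    rw [hm3]
    cases l with
    | nil => exact absurd rfl hlnil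
    | cons a t => simpa using h2
  refine ⟨m, ?_, hm1, hm2, hmh, ?_, ?_⟩
  · intro h; rw [h] at hmh; simp at hmh
  · rw [hm4, List.getLast?_concat]
  · have hlen : (m.length : ℝ) ≤ (K:ℝ) + 3 := by
      have : m.length ≤ K + 3 := by
        refine hm5.trans ?_
        simp only [List.length_append, List.length_singleton]
        omega
      exact_mod_cast this
    have hKlt : (K:ℝ) < (1-η)/ν + 1 := by
      apply Nat.ceil_lt_add_one
      exact div_nonneg (by linarith) hν.le
    have h4 : 4 ≤ η/ν := by
      rw [le_div_iff₀ hν]; linarith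
    have hsum : (1-η)/ν + η/ν = 1/ν := by
      rw [← add_div]; ring_nf
    linarith
end

section
/- Let 0 < 1/n ≪ ν ≪ τ ≪ η < 1. Let G be a balanced bipartite graph with vertex classes A, B, |A| = |B| = n, minimum degree δ(G) ≥ ηn, which is a bipartite robust (ν,τ)-expander with bipartition A, B. Then G contains a perfect matching. -/
open Finset

/-- Let `0 < 1/n ≪ ν ≪ τ ≪ η < 1`.  If `G` is a balanced bipartite graph with vertex
classes `A, B` of size `n`, minimum degree at least `ηn`, and `G` is a bipartite robust
`(ν,τ)`-expander with bipartition `A, B` (every `S ⊆ A` with `τ|A| ≤ |S| ≤ (1-τ)|A|`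
satisfies `|RN_ν(S) ∩ B| ≥ |S| + ν|V(G)|`), then `G` contains a perfect matching. -/
theorem stmt10 :
    ∀ η : ℝ, 0 < η → η < 1 →
    ∃ τ₀ : ℝ, 0 < τ₀ ∧ ∀ τ : ℝ, 0 < τ → τ ≤ τ₀ →
    ∃ ν₀ : ℝ, 0 < ν₀ ∧ ∀ ν : ℝ, 0 < ν → ν ≤ ν₀ →
    ∃ n₀ : ℕ, ∀ n : ℕ, n₀ ≤ n →
    ∀ (V : Type) [Fintype V] [DecidableEq V] (G : SimpleGraph V) [DecidableRel G.Adj]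
      (A B : Finset V),
      Disjoint A B → A ∪ B = Finset.univ → A.card = n → B.card = n →
      -- G is bipartite with classes A, B
      (∀ u v : V, G.Adj u v → (u ∈ A ∧ v ∈ B) ∨ (u ∈ B ∧ v ∈ A)) →
      -- minimum degree at least ηn
      (∀ v : V, η * (n : ℝ) ≤ (G.degree v : ℝ)) →
      -- bipartite robust (ν,τ)-expander with bipartition A, B
      (∀ S ⊆ A, τ * (A.card : ℝ) ≤ S.card → (S.card : ℝ) ≤ (1 - τ) * A.card →
        (S.card : ℝ) + ν * (Fintype.card V : ℝ) ≤
          ((B.filter fun v =>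
            ν * (Fintype.card V : ℝ) ≤ ((G.neighborFinset v ∩ S).card : ℝ)).card : ℝ)) →
      ∃ M : G.Subgraph, M.IsPerfectMatching := by
  intro η hη0 hη1
  refine ⟨η / 2, by positivity, fun τ hτ0 hτη => ?_⟩
  refine ⟨τ, hτ0, fun ν hν0 hντ => ?_⟩
  refine ⟨1, fun n hn V _ _ G _ A B hAB hABuniv hA hB hbip hdeg hexp => ?_⟩
  classical
  have hnpos : (0:ℝ) < (n:ℝ) := by exact_mod_cast hn
  have hcardV : (Fintype.card V : ℝ) = 2 * n := by
    have : Fintype.card V = 2 * n := by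
      rw [← Finset.card_univ, ← hABuniv, Finset.card_union_of_disjoint hAB, hA, hB]; ring
    exact_mod_cast this
  have hVpos : (0:ℝ) < ν * (Fintype.card V : ℝ) := by
    rw [hcardV]; positivity
  have hnbB : ∀ a ∈ A, G.neighborFinset a ⊆ B := by
    intro a ha v hv
    rw [SimpleGraph.mem_neighborFinset] at hv
    rcases hbip a v hv with ⟨_, h⟩ | ⟨h, _⟩
    · exact h
    · exact absurd ha (Finset.disjoint_left.mp hAB.symm h)
  have hnbA : ∀ b ∈ B, G.neighborFinset b ⊆ A := by
    intro b hb v hv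
    rw [SimpleGraph.mem_neighborFinset] at hv
    rcases hbip b v hv with ⟨h, _⟩ | ⟨_, h⟩
    · exact absurd hb (Finset.disjoint_left.mp hAB h)
    · exact h
  -- the Hall condition
  have hall : ∀ s : Finset {x // x ∈ A},
      s.card ≤ (s.biUnion fun a => G.neighborFinset a.1).card := by
    intro s
    set S : Finset V := s.image Subtype.val with hS
    have hScard : S.card = s.card := Finset.card_image_of_injective _ Subtype.val_injective
    have hSA : S ⊆ A := by
      intro x hx
      obtain ⟨a, _, rfl⟩ := Finset.mem_image.mp hx
      exact a.2
    set N : Finset V := S.biUnion (fun a => G.neighborFinset a) with hN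
    have hNeq : s.biUnion (fun a => G.neighborFinset a.1) = N := by
      rw [hN, hS, Finset.image_biUnion]
    rw [hNeq, ← hScard]
    rcases lt_or_ge ((S.card : ℝ)) (τ * n) with h1 | h1
    · -- small case
      rcases S.eq_empty_or_nonempty with he | ⟨a, ha⟩
      · rw [he]; simp
      · have hsub : G.neighborFinset a ⊆ N := by
          rw [hN]; exact Finset.subset_biUnion_of_mem (fun a => G.neighborFinset a) ha
        have : (S.card : ℝ) < (N.card : ℝ) := by
          calc (S.card : ℝ) < τ * n := h1
            _ ≤ η * n := by
                apply mul_le_mul_of_nonneg_right _ hnpos.le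
                linarith
            _ ≤ (G.degree a : ℝ) := hdeg a
            _ = ((G.neighborFinset a).card : ℝ) := by
                rw [SimpleGraph.card_neighborFinset_eq_degree]
            _ ≤ (N.card : ℝ) := by exact_mod_cast Finset.card_le_card hsub
        exact_mod_cast this.le
    · rcases le_or_gt ((S.card : ℝ)) ((1 - τ) * n) with h2 | h2
      · -- expansion case
        have hexp' := hexp S hSA (by rw [hA]; exact h1) (by rw [hA]; exact h2)
        have hsub : (B.filter fun v =>
            ν * (Fintype.card V : ℝ) ≤ ((G.neighborFinset v ∩ S).card : ℝ)) ⊆ N := by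
          intro v hv
          rw [Finset.mem_filter] at hv
          have hpos : 0 < (G.neighborFinset v ∩ S).card := by
            by_contra h
            push_neg at h
            have h0 : (G.neighborFinset v ∩ S).card = 0 := Nat.le_zero.mp h
            rw [h0] at hv
            push_cast at hv
            linarith [hv.2]
          obtain ⟨a, ha⟩ := Finset.card_pos.mp hpos
          rw [Finset.mem_inter, SimpleGraph.mem_neighborFinset] at ha
          rw [hN]
          exact Finset.mem_biUnion.mpr ⟨a, ha.2,
            (SimpleGraph.mem_neighborFinset _ _ _).mpr ha.1.symm⟩
        have : (S.card : ℝ) ≤ (N.card : ℝ) := by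
          calc (S.card : ℝ) ≤ (S.card : ℝ) + ν * (Fintype.card V : ℝ) := by linarith
            _ ≤ _ := hexp'
            _ ≤ (N.card : ℝ) := by exact_mod_cast Finset.card_le_card hsub
        exact_mod_cast this
      · -- large case : B ⊆ N
        have hBN : B ⊆ N := by
          intro b hb
          have hsplit : (G.neighborFinset b ∩ S).card + (G.neighborFinset b \ S).card
              = (G.neighborFinset b).card := Finset.card_inter_add_card_sdiff _ _
          have hsd : (G.neighborFinset b \ S) ⊆ (A \ S) :=
            Finset.sdiff_subset_sdiff (hnbA b hb) le_rfl
          have hASc : ((A \ S).card : ℝ) = (n : ℝ) - S.card := by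
            rw [Finset.card_sdiff_of_subset hSA, hA]
            exact_mod_cast Nat.cast_sub (by rw [← hA]; exact Finset.card_le_card hSA)
          have hsd' : ((G.neighborFinset b \ S).card : ℝ) < τ * n := by
            calc ((G.neighborFinset b \ S).card : ℝ) ≤ ((A \ S).card : ℝ) := by
                  exact_mod_cast Finset.card_le_card hsd
              _ = (n : ℝ) - S.card := hASc
              _ < τ * n := by linarith
          have hdegb : η * n ≤ ((G.neighborFinset b).card : ℝ) := by
            rw [SimpleGraph.card_neighborFinset_eq_degree]; exact hdeg b
          have hpos : 0 < ((G.neighborFinset b ∩ S).card : ℝ) := by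
            have := hsplit
            have hcast : ((G.neighborFinset b ∩ S).card : ℝ)
                + ((G.neighborFinset b \ S).card : ℝ)
                = ((G.neighborFinset b).card : ℝ) := by exact_mod_cast this
            have hτη' : τ * n ≤ (η / 2) * n :=
              mul_le_mul_of_nonneg_right hτη hnpos.le
            nlinarith
          have hpos' : 0 < (G.neighborFinset b ∩ S).card := by exact_mod_cast hpos
          obtain ⟨a, ha⟩ := Finset.card_pos.mp hpos'
          rw [Finset.mem_inter, SimpleGraph.mem_neighborFinset] at ha
          rw [hN]
          exact Finset.mem_biUnion.mpr ⟨a, ha.2,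
            (SimpleGraph.mem_neighborFinset _ _ _).mpr ha.1.symm⟩
        calc S.card ≤ A.card := Finset.card_le_card hSA
          _ = B.card := by rw [hA, hB]
          _ ≤ N.card := Finset.card_le_card hBN
  obtain ⟨f, hfinj, hfmem⟩ :=
    (Finset.all_card_le_biUnion_card_iff_existsInjective'
      (fun a : {x // x ∈ A} => G.neighborFinset a.1)).mp hall
  have hfB : ∀ a : {x // x ∈ A}, f a ∈ B := fun a => hnbB a.1 a.2 (hfmem a)
  -- build the equivalence
  let g : {x // x ∈ A} → {x // x ∈ B} := fun a => ⟨f a, hfB a⟩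
  have hginj : Function.Injective g := by
    intro a b hab
    exact hfinj (congrArg Subtype.val hab)
  have hgbij : Function.Bijective g := by
    rw [Fintype.bijective_iff_injective_and_card]
    refine ⟨hginj, ?_⟩
    rw [Fintype.card_coe, Fintype.card_coe, hA, hB]
  let e : {x // x ∈ A} ≃ {x // x ∈ B} := Equiv.ofBijective g hgbij
  have hdisj : Disjoint (↑A : Set V) (↑B : Set V) := Finset.disjoint_coe.mpr hAB
  have hadj : ∀ v : (↑A : Set V), G.Adj v (e ⟨v.1, v.2⟩ : {x // x ∈ B}) := by
    intro v
    have := hfmem ⟨v.1, v.2⟩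
    rw [SimpleGraph.mem_neighborFinset] at this
    exact this
  -- transfer e to an equivalence between set coercions
  let e' : (↑A : Set V) ≃ (↑B : Set V) :=
    ⟨fun v => ⟨(e ⟨v.1, v.2⟩).1, (e ⟨v.1, v.2⟩).2⟩,
     fun v => ⟨(e.symm ⟨v.1, v.2⟩).1, (e.symm ⟨v.1, v.2⟩).2⟩,
     fun v => by simp, fun v => by simp⟩
  obtain ⟨M, hMverts, hMmatch⟩ :=
    SimpleGraph.Subgraph.IsMatching.exists_of_disjoint_sets_of_equiv hdisj e'
      (fun v => hadj v)
  refine ⟨M, hMmatch, ?_⟩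
  intro v
  rw [hMverts]
  have : v ∈ A ∪ B := hABuniv ▸ Finset.mem_univ v
  rcases Finset.mem_union.mp this with h | h
  · exact Or.inl h
  · exact Or.inr h
end

section
/- Let G be a balanced bipartite graph with classes A, B of size n, δ(G) ≥ ηn, which is a bipartite robust (ν,τ)-expander with bipartition A, B, and let M be a perfect matching of G. Then the M-auxiliary digraph G* of G is a robust (ν,τ)-outexpander on n vertices with minimum semidegree δ⁰(G*) ≥ ηn/2 (for n sufficiently large). -/
open Finset

/-- Let `G` be a balanced bipartite graph with classes `A, B` of size `n`,
`δ(G) ≥ ηn`, which is a bipartite robust `(ν,τ)`-expander with bipartition `A, B`,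
and let `M` be a perfect matching of `G` (encoded by an involution `f` matching each
vertex to its partner).  Then the `M`-auxiliary digraph `G*` on vertex set `B`
(with an edge from `v` to `x` iff `x ∈ N_G(f v) \ {v}`) is a robust
`(ν,τ)`-outexpander with minimum semidegree at least `ηn/2`, for `n` large. -/
theorem stmt11 :
    ∀ η : ℝ, 0 < η → η < 1 →
    ∃ τ₀ : ℝ, 0 < τ₀ ∧ ∀ τ : ℝ, 0 < τ → τ ≤ τ₀ →
    ∃ ν₀ : ℝ, 0 < ν₀ ∧ ∀ ν : ℝ, 0 < ν → ν ≤ ν₀ →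
    ∃ n₀ : ℕ, ∀ n : ℕ, n₀ ≤ n →
    ∀ (V : Type) [Fintype V] [DecidableEq V] (G : SimpleGraph V) [DecidableRel G.Adj]
      (A B : Finset V) (f : V → V),
      Disjoint A B → A ∪ B = Finset.univ → A.card = n → B.card = n →
      -- G is bipartite with classes A, B
      (∀ u v : V, G.Adj u v → (u ∈ A ∧ v ∈ B) ∨ (u ∈ B ∧ v ∈ A)) →
      -- minimum degree at least ηn
      (∀ v : V, η * (n : ℝ) ≤ (G.degree v : ℝ)) →
      -- bipartite robust (ν,τ)-expander with bipartition A, B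
      (∀ S ⊆ A, τ * (A.card : ℝ) ≤ S.card → (S.card : ℝ) ≤ (1 - τ) * A.card →
        (S.card : ℝ) + ν * (Fintype.card V : ℝ) ≤
          ((B.filter fun v =>
            ν * (Fintype.card V : ℝ) ≤ ((G.neighborFinset v ∩ S).card : ℝ)).card : ℝ)) →
      -- f encodes a perfect matching M of G
      (∀ v : V, G.Adj v (f v)) → (∀ v : V, f (f v) = v) →
      -- conclusion: G* is a robust (ν,τ)-outexpander ...
      ((∀ S ⊆ B, τ * (n : ℝ) ≤ S.card → (S.card : ℝ) ≤ (1 - τ) * n →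
          (S.card : ℝ) + ν * n ≤
            ((B.filter fun x =>
              ν * (n : ℝ) ≤ ((S.filter fun v => x ≠ v ∧ G.Adj (f v) x).card : ℝ)).card : ℝ)) ∧
        -- ... with minimum semidegree at least ηn/2
        (∀ v ∈ B,
          η * (n : ℝ) / 2 ≤ ((B.filter fun x => x ≠ v ∧ G.Adj (f v) x).card : ℝ) ∧
          η * (n : ℝ) / 2 ≤ ((B.filter fun u => v ≠ u ∧ G.Adj (f u) v).card : ℝ))) := by
 
  intro η hη0 hη1
  refine ⟨1/2, by norm_num, fun τ hτ0 hτ1 => ⟨1, one_pos, fun ν hν0 hν1 => ?_⟩⟩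
  refine ⟨⌈2/η + 1/ν⌉₊, fun n hn => ?_⟩
  intro V _ _ G _ A B f hdisj huniv hA hB hbip hdeg hexp hM hf
  have hfinj : Function.Injective f := fun a b h => by rw [← hf a, h, hf b]
  have hnR : (2/η + 1/ν : ℝ) ≤ n := le_trans (Nat.le_ceil _) (by exact_mod_cast hn)
  have h2η : (2:ℝ) ≤ η * n := by
    have h1 : 2/η ≤ (n:ℝ) := by
      have : (0:ℝ) < 1/ν := by positivity
      linarith
    calc (2:ℝ) = η * (2/η) := by field_simp
    _ ≤ η * n := by apply mul_le_mul_of_nonneg_left h1 (le_of_lt hη0)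
  have h1ν : (1:ℝ) ≤ ν * n := by
    have h1 : 1/ν ≤ (n:ℝ) := by
      have : (0:ℝ) < 2/η := by positivity
      linarith
    calc (1:ℝ) = ν * (1/ν) := by field_simp
    _ ≤ ν * n := by apply mul_le_mul_of_nonneg_left h1 (le_of_lt hν0)
  have hAB : ∀ v ∈ A, v ∉ B := fun v hv => Finset.disjoint_left.mp hdisj hv
  have hfA : ∀ v ∈ B, f v ∈ A := by
    intro v hv
    rcases hbip v (f v) (hM v) with ⟨h1, _⟩ | ⟨_, h2⟩
    · exact absurd hv (hAB v h1)
    · exact h2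
  have hfB : ∀ v ∈ A, f v ∈ B := by
    intro v hv
    rcases hbip v (f v) (hM v) with ⟨_, h2⟩ | ⟨h1, _⟩
    · exact h2
    · exact absurd h1 (hAB v hv)
  have hcardV : (Fintype.card V : ℝ) = 2 * n := by
    have : Fintype.card V = A.card + B.card := by
      rw [← Finset.card_union_of_disjoint hdisj, huniv, Finset.card_univ]
    rw [this, hA, hB]; push_cast; ring
  -- a general counting helper
  have herase : ∀ (s t : Finset V) (a : V), (s.erase a).card ≤ t.card →
      (s.card : ℝ) ≤ (t.card : ℝ) + 1 := by
    intro s t a hst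
    have h1 : s.card ≤ (s.erase a).card + 1 := by
      have := Finset.pred_card_le_card_erase (s := s) (a := a)
      omega
    have : s.card ≤ t.card + 1 := by omega
    exact_mod_cast this
  constructor
  · -- robust outexpansion
    intro S hS hS1 hS2
    set S' := S.image f with hS'def
    have hS'A : S' ⊆ A := by
      intro a ha
      rcases Finset.mem_image.mp ha with ⟨v, hv, rfl⟩
      exact hfA v (hS hv)
    have hcS' : S'.card = S.card := Finset.card_image_of_injective S hfinj
    have hexp' := hexp S' hS'A (by rw [hcS', hA]; exact hS1) (by rw [hcS', hA]; exact hS2)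
    have hsub : (B.filter fun x => ν * (Fintype.card V : ℝ) ≤ ((G.neighborFinset x ∩ S').card : ℝ))
        ⊆ B.filter fun x => ν * (n:ℝ) ≤ ((S.filter fun v => x ≠ v ∧ G.Adj (f v) x).card : ℝ) := by
      intro x hx
      rw [Finset.mem_filter] at hx ⊢
      refine ⟨hx.1, ?_⟩
      have hmap : ((G.neighborFinset x ∩ S').erase (f x)).card ≤
          (S.filter fun v => x ≠ v ∧ G.Adj (f v) x).card := by
        apply Finset.card_le_card_of_injOn f
        · intro a ha
          rw [Finset.mem_coe, Finset.mem_erase, Finset.mem_inter] at ha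
          obtain ⟨hane, hax, haS'⟩ := ha
          rcases Finset.mem_image.mp haS' with ⟨v, hvS, rfl⟩
          rw [Finset.mem_coe, Finset.mem_filter, hf]
          refine ⟨hvS, ?_, ((SimpleGraph.mem_neighborFinset _ _ _).mp hax).symm⟩
          intro h
          exact hane (congrArg f h).symm
        · exact fun a _ b _ h => hfinj h
      have hkey := herase _ _ (f x) hmap
      have hx2 := hx.2
      rw [hcardV] at hx2
      linarith
    have hle := Finset.card_le_card hsub
    have hle' : ((B.filter fun x => ν * (Fintype.card V : ℝ) ≤
          ((G.neighborFinset x ∩ S').card : ℝ)).card : ℝ) ≤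
        ((B.filter fun x =>
          ν * (n:ℝ) ≤ ((S.filter fun v => x ≠ v ∧ G.Adj (f v) x).card : ℝ)).card : ℝ) := by
      exact_mod_cast hle
    rw [hcS'] at hexp'
    have hνn : (0:ℝ) ≤ ν * n := by positivity
    have hgoal := hexp'.trans hle'
    rw [hcardV] at hgoal
    linarith
  · -- semidegrees
    intro v hvB
    have hfvA : f v ∈ A := hfA v hvB
    constructor
    · -- outdegree
      have hmap : ((G.neighborFinset (f v)).erase v).card ≤
          (B.filter fun x => x ≠ v ∧ G.Adj (f v) x).card := by
        apply Finset.card_le_card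
        intro x hx
        rw [Finset.mem_erase, SimpleGraph.mem_neighborFinset] at hx
        obtain ⟨hxv, hadj⟩ := hx
        rw [Finset.mem_filter]
        rcases hbip _ _ hadj with ⟨h1, h2⟩ | ⟨h1, _⟩
        · exact ⟨h2, hxv, hadj⟩
        · exact absurd h1 (hAB _ hfvA)
      have hkey := herase _ _ v hmap
      have hdeg' := hdeg (f v)
      rw [← SimpleGraph.card_neighborFinset_eq_degree] at hdeg'
      linarith
    · -- indegree
      have hmap : ((G.neighborFinset v).erase (f v)).card ≤
          (B.filter fun u => v ≠ u ∧ G.Adj (f u) v).card := by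
        apply Finset.card_le_card_of_injOn f
        · intro a ha
          rw [Finset.mem_coe, Finset.mem_erase, SimpleGraph.mem_neighborFinset] at ha
          obtain ⟨hane, hadj⟩ := ha
          have haA : a ∈ A := by
            rcases hbip _ _ hadj with ⟨h1, _⟩ | ⟨_, h2⟩
            · exact absurd hvB (hAB v h1)
            · exact h2
          rw [Finset.mem_coe, Finset.mem_filter, hf]
          refine ⟨hfB a haA, ?_, hadj.symm⟩
          intro h
          exact hane (by rw [h, hf])
        · exact fun a _ b _ h => hfinj h
      have hkey := herase _ _ (f v) hmap
      have hdeg' := hdeg v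
      rw [← SimpleGraph.card_neighborFinset_eq_degree] at hdeg'
      linarith
end

section
/- Let n, D ∈ ℕ with 0 < 1/n ≪ ρ ≪ ν ≪ τ ≪ α < 1. Let G be a D-regular graph on n vertices with D ≥ αn, and let U be a ρ-component of G (i.e. |U| ≥ √ρ·n and e(U, V(G)\U) ≤ ρn²). Let S ⊆ U with |S| ≥ τ|U|, and let N := RN_{ν,U}(S) be the set of vertices of G[U] having at least ν|U| neighbours in S. Then |N| ≥ |S| - √ν·n and |N| ≥ D - √ν·n. -/
open Finset

lemma card_interedges_eq_sum' {V : Type} [Fintype V] [DecidableEq V]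
    (G : SimpleGraph V) [DecidableRel G.Adj] (s t : Finset V) :
    (G.interedges s t).card = ∑ v ∈ s, (G.neighborFinset v ∩ t).card := by
  rw [SimpleGraph.interedges, Rel.interedges_eq_biUnion, card_biUnion]
  · refine sum_congr rfl fun x _ => ?_
    rw [card_map]
    congr 1
    ext v
    simp [SimpleGraph.mem_neighborFinset, and_comm]
  · intro x hx y hy hxy
    simp only [disjoint_left, mem_map, Function.Embedding.coeFn_mk]
    rintro a ⟨u, hu, rfl⟩ ⟨w, hw, h⟩
    apply hxy
    have := congrArg Prod.fst h
    simpa using this.symm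

set_option maxHeartbeats 1600000 in
/-- Let `0 < 1/n ≪ ρ ≪ ν ≪ τ ≪ α < 1`, let `G` be `D`-regular on `n` vertices with
`D ≥ αn`, let `U` be a `ρ`-component (`|U| ≥ √ρ·n` and `e(U, V(G)\U) ≤ ρn²`), and
let `S ⊆ U` with `|S| ≥ τ|U|`.  Then `N := RN_{ν,U}(S)`, the set of vertices of `U`
with at least `ν|U|` neighbours in `S`, satisfies `|N| ≥ |S| - √ν·n` and
`|N| ≥ D - √ν·n`. -/
theorem stmt13 :
    ∀ α : ℝ, 0 < α → α < 1 →
    ∃ τ₀ : ℝ, 0 < τ₀ ∧ ∀ τ : ℝ, 0 < τ → τ ≤ τ₀ →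
    ∃ ν₀ : ℝ, 0 < ν₀ ∧ ∀ ν : ℝ, 0 < ν → ν ≤ ν₀ →
    ∃ ρ₀ : ℝ, 0 < ρ₀ ∧ ∀ ρ : ℝ, 0 < ρ → ρ ≤ ρ₀ →
    ∃ n₀ : ℕ, ∀ n : ℕ, n₀ ≤ n →
    ∀ (V : Type) [Fintype V] [DecidableEq V] (G : SimpleGraph V) [DecidableRel G.Adj]
      (D : ℕ), Fintype.card V = n → G.IsRegularOfDegree D → α * (n : ℝ) ≤ D →
    ∀ U : Finset V,
      Real.sqrt ρ * (n : ℝ) ≤ U.card →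
      ((G.interedges U Uᶜ).card : ℝ) ≤ ρ * (n : ℝ) ^ 2 →
    ∀ S ⊆ U, τ * (U.card : ℝ) ≤ S.card →
      (S.card : ℝ) - Real.sqrt ν * n ≤
        ((U.filter fun v =>
          ν * (U.card : ℝ) ≤ ((G.neighborFinset v ∩ S).card : ℝ)).card : ℝ) ∧
      (D : ℝ) - Real.sqrt ν * n ≤
        ((U.filter fun v =>
          ν * (U.card : ℝ) ≤ ((G.neighborFinset v ∩ S).card : ℝ)).card : ℝ) := by
  intro α hα _hα1
  refine ⟨1, one_pos, fun τ hτ _hτ1 => ?_⟩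
  refine ⟨min (τ ^ 2 / 4) (α ^ 2 / 4), by positivity, fun ν hν hν0 => ?_⟩
  refine ⟨min ν (ν * τ ^ 2 / 4), by positivity, fun ρ hρ hρ0 => ?_⟩
  refine ⟨1, fun n hn V _ _ G _ D hcard hreg hD U hUρ hUout S hSU hSτ => ?_⟩
  -- basic numeric facts
  have hn1 : (1 : ℝ) ≤ n := by exact_mod_cast hn
  have hn0 : (0 : ℝ) ≤ n := by linarith
  have hρν : ρ ≤ ν := hρ0.trans (min_le_left _ _)
  have hsνnn : (0:ℝ) ≤ Real.sqrt ν := Real.sqrt_nonneg ν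
  have hνsq : Real.sqrt ν ^ 2 = ν := Real.sq_sqrt hν.le
  have hρsq : Real.sqrt ρ ^ 2 = ρ := Real.sq_sqrt hρ.le
  have hsν3 : Real.sqrt ν ≤ τ / 2 := by
    have h := hν0.trans (min_le_left _ _)
    have : Real.sqrt ν ≤ Real.sqrt (τ ^ 2 / 4) := Real.sqrt_le_sqrt (hν0.trans (min_le_left _ _))
    calc Real.sqrt ν ≤ Real.sqrt ((τ/2)^2) := by rw [show (τ/2)^2 = τ^2/4 by ring]; exact this
      _ = τ / 2 := Real.sqrt_sq (by positivity)
  have hsν2 : Real.sqrt ν ≤ α / 2 := by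
    have : Real.sqrt ν ≤ Real.sqrt (α ^ 2 / 4) := Real.sqrt_le_sqrt (hν0.trans (min_le_right _ _))
    calc Real.sqrt ν ≤ Real.sqrt ((α/2)^2) := by rw [show (α/2)^2 = α^2/4 by ring]; exact this
      _ = α / 2 := Real.sqrt_sq (by positivity)
  have hsρ : Real.sqrt ρ ≤ Real.sqrt ν * (τ / 2) := by
    have : Real.sqrt ρ ≤ Real.sqrt (ν * τ ^ 2 / 4) := Real.sqrt_le_sqrt (hρ0.trans (min_le_right _ _))
    calc Real.sqrt ρ ≤ Real.sqrt ((Real.sqrt ν * (τ/2))^2) := by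
          rw [show (Real.sqrt ν * (τ/2))^2 = Real.sqrt ν ^2 * (τ^2/4) by ring, hνsq,
            show ν * (τ^2/4) = ν * τ^2/4 by ring]; exact this
      _ = Real.sqrt ν * (τ / 2) := Real.sqrt_sq (by positivity)
  have hDpos : (0:ℝ) < D := lt_of_lt_of_le (by nlinarith) hD
  have hUn : (U.card : ℝ) ≤ n := by
    have : U.card ≤ n := by rw [← hcard]; exact card_le_univ U
    exact_mod_cast this
  have hsρ0 : (0:ℝ) < Real.sqrt ρ := Real.sqrt_pos.mpr hρ
  have hUpos : (0:ℝ) < U.card := lt_of_lt_of_le (by positivity) hUρ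
  have hSpos : (0:ℝ) < S.card := lt_of_lt_of_le (by positivity) hSτ
  -- the robust neighbourhood
  set p : V → Prop := fun v => ν * (U.card : ℝ) ≤ ((G.neighborFinset v ∩ S).card : ℝ) with hp
  have hE : (∑ v ∈ U, ((G.neighborFinset v ∩ S).card : ℝ))
      = ∑ v ∈ U, ((G.neighborFinset v ∩ S).card : ℝ) := rfl
  -- lower bound on E
  have hE1 : (D:ℝ) * S.card - ρ * n ^ 2 ≤ ∑ v ∈ U, ((G.neighborFinset v ∩ S).card : ℝ) := by
    have hEeq : (∑ v ∈ U, ((G.neighborFinset v ∩ S).card : ℝ))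
        = ∑ s ∈ S, ((G.neighborFinset s ∩ U).card : ℝ) := by
      have h1 := card_interedges_eq_sum' G U S
      have h2 := card_interedges_eq_sum' G S U
      have hcomm : (G.interedges U S).card = (G.interedges S U).card :=
        by haveI : Std.Symm G.Adj := ⟨fun _ _ h => h.symm⟩; exact Rel.card_interedges_comm U S
      have h3 : ∑ v ∈ U, (G.neighborFinset v ∩ S).card
          = ∑ s ∈ S, (G.neighborFinset s ∩ U).card := by rw [← h1, hcomm, h2]
      exact_mod_cast h3
    have hout : ∀ s ∈ S, ((G.neighborFinset s ∩ U).card : ℝ)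
        = (D : ℝ) - ((G.neighborFinset s ∩ Uᶜ).card : ℝ) := by
      intro s _
      have h := Finset.card_inter_add_card_sdiff (G.neighborFinset s) U
      rw [sdiff_eq, SimpleGraph.card_neighborFinset_eq_degree, hreg s] at h
      have := congrArg (fun x : ℕ => (x : ℝ)) h
      push_cast at this
      simp only [Finset.inf_eq_inter] at this
      linarith
    have hsumout : ∑ s ∈ S, ((G.neighborFinset s ∩ Uᶜ).card : ℝ) ≤ ρ * n ^ 2 := by
      have hmono : ∑ s ∈ S, (G.neighborFinset s ∩ Uᶜ).card
          ≤ ∑ s ∈ U, (G.neighborFinset s ∩ Uᶜ).card :=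
        Finset.sum_le_sum_of_subset hSU
      have heq : ∑ s ∈ U, (G.neighborFinset s ∩ Uᶜ).card = (G.interedges U Uᶜ).card :=
        (card_interedges_eq_sum' G U Uᶜ).symm
      calc (∑ s ∈ S, ((G.neighborFinset s ∩ Uᶜ).card : ℝ))
          = ((∑ s ∈ S, (G.neighborFinset s ∩ Uᶜ).card : ℕ) : ℝ) := by push_cast; ring
        _ ≤ ((G.interedges U Uᶜ).card : ℝ) := by rw [← heq]; exact_mod_cast hmono
        _ ≤ ρ * n ^ 2 := hUout
    rw [hEeq, Finset.sum_congr rfl hout, Finset.sum_sub_distrib, Finset.sum_const,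
      nsmul_eq_mul]
    have : (S.card : ℝ) * D = (D:ℝ) * S.card := by ring
    linarith [hsumout]
  -- generic upper bound on E
  have hEup : ∀ b : ℝ, (∀ v ∈ U.filter p, ((G.neighborFinset v ∩ S).card : ℝ) ≤ b) →
      (∑ v ∈ U, ((G.neighborFinset v ∩ S).card : ℝ))
        ≤ ((U.filter p).card : ℝ) * b + ν * (U.card : ℝ) ^ 2 := by
    intro b hb
    have hsplit : (∑ v ∈ U, ((G.neighborFinset v ∩ S).card : ℝ))
        = ∑ v ∈ U.filter p, ((G.neighborFinset v ∩ S).card : ℝ)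
        + ∑ v ∈ U.filter (fun v => ¬ p v), ((G.neighborFinset v ∩ S).card : ℝ) := by
      rw [Finset.sum_filter_add_sum_filter_not]
    have h1 : ∑ v ∈ U.filter p, ((G.neighborFinset v ∩ S).card : ℝ)
        ≤ ((U.filter p).card : ℝ) * b := by
      calc ∑ v ∈ U.filter p, ((G.neighborFinset v ∩ S).card : ℝ)
          ≤ ∑ _v ∈ U.filter p, b := Finset.sum_le_sum (fun v hv => hb v hv)
        _ = ((U.filter p).card : ℝ) * b := by rw [Finset.sum_const, nsmul_eq_mul]
    have h2 : ∑ v ∈ U.filter (fun v => ¬ p v), ((G.neighborFinset v ∩ S).card : ℝ)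
        ≤ ν * (U.card : ℝ) ^ 2 := by
      have hterm : ∀ v ∈ U.filter (fun v => ¬ p v),
          ((G.neighborFinset v ∩ S).card : ℝ) ≤ ν * (U.card : ℝ) := by
        intro v hv
        have := (Finset.mem_filter.mp hv).2
        rw [hp] at this
        exact le_of_not_ge this
      calc ∑ v ∈ U.filter (fun v => ¬ p v), ((G.neighborFinset v ∩ S).card : ℝ)
          ≤ ∑ _v ∈ U.filter (fun v => ¬ p v), ν * (U.card : ℝ) := Finset.sum_le_sum hterm
        _ = ((U.filter (fun v => ¬ p v)).card : ℝ) * (ν * U.card) := by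
            rw [Finset.sum_const, nsmul_eq_mul]
        _ ≤ (U.card : ℝ) * (ν * U.card) := by
            have := Finset.card_filter_le U (fun v => ¬ p v)
            have h' : ((U.filter (fun v => ¬ p v)).card : ℝ) ≤ U.card := by exact_mod_cast this
            have hb' : (0:ℝ) ≤ ν * U.card := by positivity
            exact mul_le_mul_of_nonneg_right h' hb'
        _ = ν * (U.card : ℝ) ^ 2 := by ring
    linarith [hsplit, h1, h2]
  have key1 : (D:ℝ) * S.card - ρ * n ^ 2
      ≤ ((U.filter p).card : ℝ) * D + ν * (U.card : ℝ) ^ 2 := by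
    refine hE1.trans (hEup D (fun v hv => ?_))
    have : (G.neighborFinset v ∩ S).card ≤ (G.neighborFinset v).card :=
      Finset.card_le_card (Finset.inter_subset_left)
    rw [SimpleGraph.card_neighborFinset_eq_degree, hreg v] at this
    exact_mod_cast this
  have key2 : (D:ℝ) * S.card - ρ * n ^ 2
      ≤ ((U.filter p).card : ℝ) * S.card + ν * (U.card : ℝ) ^ 2 := by
    refine hE1.trans (hEup S.card (fun v hv => ?_))
    have : (G.neighborFinset v ∩ S).card ≤ S.card :=
      Finset.card_le_card (Finset.inter_subset_right)
    exact_mod_cast this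
  clear hE1 hEup hE
  constructor
  · -- first bound
    have c2 : ρ * n ^ 2 + ν * (U.card : ℝ) ^ 2 ≤ Real.sqrt ν * n * D := by
      have e1 : ν * (U.card : ℝ) ^ 2 ≤ ν * n ^ 2 := by nlinarith [mul_le_mul_of_nonneg_left (mul_le_mul hUn hUn hUpos.le hn0) hν.le]
      have hsum : ρ + ν ≤ α * Real.sqrt ν := by
        nlinarith [mul_nonneg (by linarith : (0:ℝ) ≤ α/2 - Real.sqrt ν) hsνnn, hνsq, hρν]
      have e2 : ρ * n ^ 2 + ν * n ^ 2 ≤ α * Real.sqrt ν * n ^ 2 := by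
        nlinarith [mul_le_mul_of_nonneg_right hsum (sq_nonneg (n:ℝ))]
      have e3 : α * Real.sqrt ν * n ^ 2 ≤ Real.sqrt ν * n * D := by
        nlinarith [mul_le_mul_of_nonneg_left hD (mul_nonneg hsνnn hn0)]
      linarith
    nlinarith [key1, c2, hDpos]
  · -- second bound
    have hτρ : τ * (Real.sqrt ρ * n) ≤ S.card := by
      nlinarith [mul_le_mul_of_nonneg_left hUρ hτ.le]
    have c2 : ρ * n ^ 2 + ν * (U.card : ℝ) ^ 2 ≤ Real.sqrt ν * n * S.card := by
      have e1 : ρ * n ^ 2 ≤ Real.sqrt ν / 2 * n * S.card := by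
        have b1 : Real.sqrt ρ * (Real.sqrt ρ * n) ≤ (Real.sqrt ν * (τ/2)) * U.card :=
          mul_le_mul hsρ hUρ (by positivity) (by positivity)
        have b2 : Real.sqrt ρ * (Real.sqrt ρ * n) * n ≤ (Real.sqrt ν * (τ/2)) * U.card * n :=
          mul_le_mul_of_nonneg_right b1 hn0
        have b3 : ρ * n ^ 2 = Real.sqrt ρ * (Real.sqrt ρ * n) * n := by
          rw [show Real.sqrt ρ * (Real.sqrt ρ * n) * n = Real.sqrt ρ ^ 2 * n ^ 2 by ring, hρsq]
        have b4 : (Real.sqrt ν * (τ/2)) * U.card * n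
            = Real.sqrt ν / 2 * n * (τ * U.card) := by ring
        have b5 : Real.sqrt ν / 2 * n * (τ * U.card) ≤ Real.sqrt ν / 2 * n * S.card :=
          mul_le_mul_of_nonneg_left hSτ (by positivity)
        linarith [b2, b5, b3.le, b4.le, b3.ge, b4.ge]
      have e2 : ν * (U.card : ℝ) ^ 2 ≤ Real.sqrt ν / 2 * n * S.card := by
        have d1 : ν ≤ Real.sqrt ν * (τ/2) := by
          nlinarith [mul_le_mul_of_nonneg_left hsν3 hsνnn, hνsq]
        have d2 : ν * (U.card : ℝ) ^ 2 ≤ (Real.sqrt ν * (τ/2)) * (U.card : ℝ) ^ 2 :=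
          mul_le_mul_of_nonneg_right d1 (sq_nonneg _)
        have d3 : (Real.sqrt ν * (τ/2)) * (U.card : ℝ) ^ 2
            = Real.sqrt ν / 2 * U.card * (τ * U.card) := by ring
        have d4 : Real.sqrt ν / 2 * U.card * (τ * U.card)
            ≤ Real.sqrt ν / 2 * U.card * S.card :=
          mul_le_mul_of_nonneg_left hSτ (by positivity)
        have d5 : Real.sqrt ν / 2 * U.card * S.card ≤ Real.sqrt ν / 2 * n * S.card := by
          have : Real.sqrt ν / 2 * U.card ≤ Real.sqrt ν / 2 * n :=
            mul_le_mul_of_nonneg_left hUn (by positivity)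
          exact mul_le_mul_of_nonneg_right this hSpos.le
        linarith [d2, d3.le, d3.ge, d4, d5]
      linarith
    nlinarith [key2, c2, hSpos]
end

section
/- Let n, D ∈ ℕ and 0 < 1/n ≪ γ' ≤ γ ≪ α < 1 with γ' ≤ γ^{7/6}. Let G be a D-regular graph on n vertices with D ≥ αn. Let Y, Z be disjoint subsets of V(G) with |Y| ≥ γn, ||Y|-|Z|| ≤ γn and e(Y, V(G)\Z) ≤ γ'n². Then e(Y, V(G)\Z) + e(Z, V(G)\Y) ≤ γ^{1/3}n², and moreover |Y|, |Z| ≥ γ^{1/6}n. -/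
open Finset

/-- The number of edges of `G` with one endpoint in `X` and the other endpoint in `W`. -/
def crossCount {V : Type*} [Fintype V] [DecidableEq V] (G : SimpleGraph V)
    [DecidableRel G.Adj] (X W : Finset V) : ℕ :=
  (G.edgeFinset.filter fun e => ∃ u v : V, e = s(u, v) ∧ u ∈ X ∧ v ∈ W).card



section Aux
open SimpleGraph

variable {V : Type} [Fintype V] [DecidableEq V] (G : SimpleGraph V) [DecidableRel G.Adj]

/-- the filtered edge set -/
def Fe (X W : Finset V) : Finset (Sym2 V) :=
  G.edgeFinset.filter fun e => ∃ u v : V, e = s(u, v) ∧ u ∈ X ∧ v ∈ W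

/-- pairs (a, b) with a ∈ X and b adjacent to a -/
def Pp (X : Finset V) : Finset (V × V) :=
  X.biUnion fun a => {a} ×ˢ G.neighborFinset a

lemma mem_Pp {X : Finset V} {p : V × V} :
    p ∈ Pp G X ↔ p.1 ∈ X ∧ G.Adj p.1 p.2 := by
  simp only [Pp, mem_biUnion, mem_product, mem_singleton, mem_neighborFinset]
  constructor
  · rintro ⟨a, ha, rfl, h⟩; exact ⟨ha, h⟩
  · rintro ⟨h1, h2⟩; exact ⟨p.1, h1, rfl, h2⟩

lemma card_Pp {D : ℕ} (hreg : G.IsRegularOfDegree D) (X : Finset V) :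
    (Pp G X).card = D * X.card := by
  rw [Pp, card_biUnion]
  · simp only [card_product, card_singleton, one_mul]
    rw [Finset.sum_congr rfl fun a _ => ?_, Finset.sum_const, smul_eq_mul, mul_comm]
    exact hreg a
  · intro a _ b _ hab
    simp only [Finset.disjoint_left, mem_product, mem_singleton]
    rintro p ⟨rfl, -⟩ ⟨h, -⟩
    exact hab h

lemma lemA {D : ℕ} (hreg : G.IsRegularOfDegree D) {Y Z : Finset V} (hYZ : Disjoint Y Z) :
    D * Y.card ≤ (Fe G Y Z).card + 2 * (Fe G Y Zᶜ).card := by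
  classical
  set f : V × V → Sym2 V := fun p => s(p.1, p.2) with hf
  have hsplit : (Pp G Y).card =
      ((Pp G Y).filter fun p => p.2 ∈ Z).card + ((Pp G Y).filter fun p => p.2 ∉ Z).card :=
    (Finset.card_filter_add_card_filter_not _).symm
  have h1 : ((Pp G Y).filter fun p => p.2 ∈ Z).card ≤ (Fe G Y Z).card := by
    apply Finset.card_le_card_of_injOn f
    · intro p hp
      rw [mem_coe, mem_filter, mem_Pp] at hp
      obtain ⟨⟨h1, h2⟩, h3⟩ := hp
      rw [mem_coe, Fe, mem_filter]
      exact ⟨mem_edgeFinset.2 h2, p.1, p.2, rfl, h1, h3⟩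
    · intro p hp q hq hpq
      rw [mem_coe, mem_filter, mem_Pp] at hp hq
      simp only [hf, Sym2.eq_iff] at hpq
      rcases hpq with ⟨h1, h2⟩ | ⟨h1, h2⟩
      · exact Prod.ext h1 h2
      · exact absurd (h2 ▸ hp.2) (Finset.disjoint_left.1 hYZ hq.1.1)
  have h2 : ((Pp G Y).filter fun p => p.2 ∉ Z).card ≤ 2 * (Fe G Y Zᶜ).card := by
    set s := (Pp G Y).filter fun p => p.2 ∉ Z with hs
    have himg : s.image f ⊆ Fe G Y Zᶜ := by
      intro e he
      rw [mem_image] at he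
      obtain ⟨p, hp, rfl⟩ := he
      rw [hs, mem_filter, mem_Pp] at hp
      rw [Fe, mem_filter]
      exact ⟨mem_edgeFinset.2 hp.1.2, p.1, p.2, rfl, hp.1.1, Finset.mem_compl.2 hp.2⟩
    calc s.card ≤ 2 * (s.image f).card := by
          apply Finset.card_le_mul_card_image s 2
          intro b hb
          rw [mem_image] at hb
          obtain ⟨p, -, rfl⟩ := hb
          have hsub2 : s.filter (fun x => f x = f p) ⊆ {(p.1, p.2), (p.2, p.1)} := by
            intro q hq
            rw [mem_filter] at hq
            simp only [hf, Sym2.eq_iff] at hq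
            rw [mem_insert, mem_singleton]
            rcases hq.2 with ⟨h1, h2⟩ | ⟨h1, h2⟩
            · exact Or.inl (Prod.ext h1 h2)
            · exact Or.inr (Prod.ext h1 h2)
          have hc2 : ({(p.1, p.2), (p.2, p.1)} : Finset (V × V)).card ≤ 2 :=
            (Finset.card_insert_le _ _).trans (by simp)
          exact le_trans (Finset.card_le_card hsub2) hc2
      _ ≤ 2 * (Fe G Y Zᶜ).card := by
          exact Nat.mul_le_mul_left 2 (Finset.card_le_card himg)
  calc D * Y.card = (Pp G Y).card := (card_Pp G hreg Y).symm
    _ = _ := hsplit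
    _ ≤ _ := Nat.add_le_add h1 h2

lemma lemB {D : ℕ} (hreg : G.IsRegularOfDegree D) {Y Z : Finset V} (hYZ : Disjoint Y Z) :
    (Fe G Y Z).card + (Fe G Z Yᶜ).card ≤ D * Z.card := by
  classical
  set f : V × V → Sym2 V := fun p => s(p.1, p.2) with hf
  have hdisj : Disjoint (Fe G Y Z) (Fe G Z Yᶜ) := by
    rw [Finset.disjoint_left]
    intro e he1 he2
    rw [Fe, mem_filter] at he1 he2
    obtain ⟨-, u, v, rfl, hu, hv⟩ := he1
    obtain ⟨-, u', v', he, hu', hv'⟩ := he2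
    rw [Sym2.eq_iff] at he
    rcases he with ⟨h1, h2⟩ | ⟨h1, h2⟩
    · exact Finset.disjoint_left.1 hYZ hu (h1 ▸ hu')
    · exact (Finset.mem_compl.1 hv') (h1 ▸ hu)
  have hsub : Fe G Y Z ∪ Fe G Z Yᶜ ⊆ (Pp G Z).image f := by
    intro e he
    rw [mem_union] at he
    rw [mem_image]
    rcases he with he | he
    · rw [Fe, mem_filter] at he
      obtain ⟨hE, u, v, rfl, hu, hv⟩ := he
      have hadj : G.Adj u v := mem_edgeSet G |>.1 (mem_edgeFinset.1 hE)
      exact ⟨(v, u), (mem_Pp G).2 ⟨hv, hadj.symm⟩, Sym2.eq_swap⟩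
    · rw [Fe, mem_filter] at he
      obtain ⟨hE, u, v, rfl, hu, hv⟩ := he
      have hadj : G.Adj u v := mem_edgeSet G |>.1 (mem_edgeFinset.1 hE)
      exact ⟨(u, v), (mem_Pp G).2 ⟨hu, hadj⟩, rfl⟩
  calc (Fe G Y Z).card + (Fe G Z Yᶜ).card = (Fe G Y Z ∪ Fe G Z Yᶜ).card :=
        (Finset.card_union_of_disjoint hdisj).symm
    _ ≤ ((Pp G Z).image f).card := Finset.card_le_card hsub
    _ ≤ (Pp G Z).card := Finset.card_image_le
    _ = D * Z.card := card_Pp G hreg Z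

lemma lemC (Y Z : Finset V) : (Fe G Y Z).card ≤ Y.card * Z.card := by
  classical
  set f : V × V → Sym2 V := fun p => s(p.1, p.2) with hf
  have hsub : Fe G Y Z ⊆ (Y ×ˢ Z).image f := by
    intro e he
    rw [Fe, mem_filter] at he
    obtain ⟨-, u, v, rfl, hu, hv⟩ := he
    exact mem_image.2 ⟨(u, v), mem_product.2 ⟨hu, hv⟩, rfl⟩
  calc (Fe G Y Z).card ≤ ((Y ×ˢ Z).image f).card := Finset.card_le_card hsub
    _ ≤ (Y ×ˢ Z).card := Finset.card_image_le
    _ = Y.card * Z.card := card_product Y Z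

lemma crossCount_eq' (X W : Finset V) :
    (G.edgeFinset.filter fun e => ∃ u v : V, e = s(u, v) ∧ u ∈ X ∧ v ∈ W).card
      = (Fe G X W).card := rfl

set_option maxHeartbeats 1000000 in
theorem stmt14' :
    ∀ α : ℝ, 0 < α → α < 1 →
    ∃ γ₀ : ℝ, 0 < γ₀ ∧ ∀ γ : ℝ, 0 < γ → γ ≤ γ₀ →
    ∀ γ' : ℝ, 0 < γ' → γ' ≤ γ → γ' ≤ γ ^ ((7 : ℝ) / 6) →
    ∃ n₀ : ℕ, ∀ n : ℕ, n₀ ≤ n →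
    ∀ (V : Type) [Fintype V] [DecidableEq V] (G : SimpleGraph V) [DecidableRel G.Adj]
      (D : ℕ), Fintype.card V = n → G.IsRegularOfDegree D → α * (n : ℝ) ≤ D →
    ∀ Y Z : Finset V, Disjoint Y Z →
      γ * (n : ℝ) ≤ Y.card →
      |(Y.card : ℝ) - Z.card| ≤ γ * n →
      (((Fe G Y Zᶜ).card : ℕ) : ℝ) ≤ γ' * (n : ℝ) ^ 2 →
      (((Fe G Y Zᶜ).card + (Fe G Z Yᶜ).card : ℕ) : ℝ) ≤ γ ^ ((1 : ℝ) / 3) * (n : ℝ) ^ 2 ∧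
      γ ^ ((1 : ℝ) / 6) * (n : ℝ) ≤ Y.card ∧
      γ ^ ((1 : ℝ) / 6) * (n : ℝ) ≤ Z.card := by
  intro α hα0 hα1
  refine ⟨(α / 8) ^ 6, by positivity, ?_⟩
  intro γ hγ0 hγγ₀ γ' hγ'0 hγ'γ hγ'76
  refine ⟨1, ?_⟩
  intro n hn V _ _ G _ D hcard hreg hD Y Z hYZ hYlb habs hc1
  have hnpos : (0:ℝ) < (n:ℝ) := by exact_mod_cast Nat.lt_of_lt_of_le Nat.zero_lt_one hn
  set nn : ℝ := (n : ℝ) with hnn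
  set g : ℝ := γ ^ ((1:ℝ)/6) with hgdef
  have hgpos : 0 < g := Real.rpow_pos_of_pos hγ0 _
  have hg6 : g ^ (6:ℕ) = γ := by
    rw [hgdef, ← Real.rpow_natCast (γ ^ ((1:ℝ)/6)) 6, ← Real.rpow_mul hγ0.le]
    norm_num
  have hg8 : g ≤ α / 8 := by
    have h6 : g ^ (6:ℕ) ≤ (α/8) ^ (6:ℕ) := by rw [hg6]; exact hγγ₀
    exact le_of_pow_le_pow_left₀ (by norm_num) (by positivity) h6
  have hγα : γ ≤ α / 8 := by
    calc γ ≤ (α/8)^6 := hγγ₀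
      _ ≤ α/8 := pow_le_of_le_one (by positivity) (by linarith) (by norm_num)
  have hγ'γg : γ' ≤ γ * g := by
    have : γ ^ ((7:ℝ)/6) = γ * g := by
      rw [hgdef, show (7:ℝ)/6 = 1 + 1/6 by norm_num, Real.rpow_add hγ0, Real.rpow_one]
    linarith [hγ'76, this ▸ hγ'76]
  -- basic cardinality facts
  have hYn : (Y.card : ℝ) ≤ nn := by
    have := Finset.card_le_univ Y
    rw [hcard] at this
    rw [hnn]; exact_mod_cast this
  have hZn : (Z.card : ℝ) ≤ nn := by
    have := Finset.card_le_univ Z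
    rw [hcard] at this
    rw [hnn]; exact_mod_cast this
  have hVne : Nonempty V := by
    rw [← Fintype.card_pos_iff, hcard]; omega
  have hDn : (D : ℝ) ≤ nn := by
    obtain ⟨v⟩ := hVne
    have := G.degree_lt_card_verts v
    rw [hreg v, hcard] at this
    rw [hnn]; exact_mod_cast this.le
  -- the three counting inequalities, in ℝ
  have hA : (D : ℝ) * Y.card ≤ ((Fe G Y Z).card : ℝ) + 2 * ((Fe G Y Zᶜ).card : ℝ) := by
    exact_mod_cast lemA G hreg hYZ
  have hB : ((Fe G Y Z).card : ℝ) + ((Fe G Z Yᶜ).card : ℝ) ≤ (D : ℝ) * Z.card := by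
    exact_mod_cast lemB G hreg hYZ
  have hC : ((Fe G Y Z).card : ℝ) ≤ (Y.card : ℝ) * Z.card := by
    exact_mod_cast lemC G Y Z
  push_cast
  set y : ℝ := (Y.card : ℝ) with hy
  set z : ℝ := (Z.card : ℝ) with hz
  set c : ℝ := ((Fe G Y Z).card : ℝ) with hcdef
  set c1 : ℝ := ((Fe G Y Zᶜ).card : ℝ) with hc1def
  set c2 : ℝ := ((Fe G Z Yᶜ).card : ℝ) with hc2def
  clear hcdef hc1def hc2def hy hz
  clear_value c2 c1 c z y g nn
  have habs1 : y - z ≤ γ * nn := (abs_le.1 habs).2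
  have habs2 : z - y ≤ γ * nn := by have := (abs_le.1 habs).1; linarith
  have hc1' : c1 ≤ γ' * nn ^ 2 := hc1
  have hypos : 0 < y := lt_of_lt_of_le (mul_pos hγ0 hnpos) hYlb
  -- lower bound on y
  have hkey : α * nn * y ≤ y * (y + γ * nn) + 2 * (γ * g) * nn ^ 2 := by
    have h1 : α * nn * y ≤ (D:ℝ) * y := by
      have := mul_le_mul_of_nonneg_right hD hypos.le
      linarith
    have h2 : (D:ℝ) * y ≤ y * z + 2 * c1 := by nlinarith [hA, hC]
    have h3 : y * z ≤ y * (y + γ * nn) := by nlinarith [habs2, hypos]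
    nlinarith [hγ'γg, hc1', sq_nonneg nn]
  have hy2 : α / 2 * nn ≤ y := by
    by_contra hlt
    push_neg at hlt
    have p1 : y * y ≤ α / 2 * nn * y := by nlinarith
    have p2 : γ * nn * y ≤ α / 8 * nn * y := by nlinarith [mul_le_mul_of_nonneg_right hγα (mul_nonneg hnpos.le hypos.le)]
    have p3 : 2 * (γ * g) * nn ^ 2 ≤ α / 4 * y * nn := by
      nlinarith [mul_le_mul_of_nonneg_right hYlb (mul_nonneg hgpos.le hnpos.le),
        mul_le_mul_of_nonneg_right hg8 (mul_nonneg hnpos.le hypos.le)]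
    nlinarith [mul_pos hnpos hypos, hα0]
  have hY6 : g * nn ≤ y := by nlinarith [hg8, hnpos]
  have hZ6 : g * nn ≤ z := by nlinarith [hg8, hnpos, habs1, hγα]
  refine ⟨?_, hY6, hZ6⟩
  -- first part
  have hc2 : c2 ≤ (D:ℝ) * (z - y) + 2 * c1 := by nlinarith [hA, hB]
  have hDzy : (D:ℝ) * (z - y) ≤ nn * (γ * nn) := by
    have hD0 : (0:ℝ) ≤ D := Nat.cast_nonneg D
    nlinarith [habs2, hDn, mul_nonneg (mul_nonneg hγ0.le hnpos.le) hD0]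
  have htot : c1 + c2 ≤ 4 * γ * nn ^ 2 := by
    have h4 : nn * (γ * nn) = γ * nn ^ 2 := by ring
    have h5 : γ' * nn ^ 2 ≤ γ * nn ^ 2 := mul_le_mul_of_nonneg_right hγ'γ (sq_nonneg nn)
    linarith [hc1', hc2, hDzy, h4, h5]
  have h13 : 4 * γ ≤ γ ^ ((1:ℝ)/3) := by
    set t : ℝ := γ ^ ((1:ℝ)/3) with htdef
    have htpos : 0 < t := Real.rpow_pos_of_pos hγ0 _
    have ht3 : t ^ (3:ℕ) = γ := by
      rw [htdef, ← Real.rpow_natCast (γ ^ ((1:ℝ)/3)) 3, ← Real.rpow_mul hγ0.le]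
      norm_num
    clear_value t
    have hγ18 : γ ≤ 1/8 := by linarith [hγα, hα1]
    have hring : t ^ (3:ℕ) = t * (t * t) := by ring
    have ht12 : t ≤ 1/2 := by
      by_contra h
      push_neg at h
      have h2 : (1/2:ℝ) * (1/2) < t * t := mul_lt_mul'' h h (by norm_num) (by norm_num)
      have h3 : (1/2:ℝ) * (t * t) < t * (t * t) :=
        mul_lt_mul_of_pos_right h (mul_pos htpos htpos)
      linarith [hγ18, ht3, hring, h2, h3,
        mul_lt_mul_of_pos_left h2 (by norm_num : (0:ℝ) < 1/2)]
    have h4 : t * t ≤ (1/2:ℝ) * (1/2) :=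
      mul_le_mul ht12 ht12 htpos.le (by norm_num)
    have h5 : t * (t * t) ≤ t * (1/4) := by
      apply mul_le_mul_of_nonneg_left _ htpos.le
      linarith
    linarith [ht3, hring, h5]
  have hfin := mul_le_mul_of_nonneg_right h13 (sq_nonneg nn)
  linarith [htot, hfin]

end Aux

/-- Let `0 < 1/n ≪ γ' ≤ γ ≪ α < 1` with `γ' ≤ γ^{7/6}`, let `G` be `D`-regular on
`n` vertices with `D ≥ αn`, and let `Y, Z` be disjoint with `|Y| ≥ γn`,
`||Y|-|Z|| ≤ γn` and `e(Y, V(G)\Z) ≤ γ'n²`.  Then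
`e(Y, V(G)\Z) + e(Z, V(G)\Y) ≤ γ^{1/3}n²` and `|Y|, |Z| ≥ γ^{1/6}n`. -/
theorem stmt14 :
    ∀ α : ℝ, 0 < α → α < 1 →
    ∃ γ₀ : ℝ, 0 < γ₀ ∧ ∀ γ : ℝ, 0 < γ → γ ≤ γ₀ →
    ∀ γ' : ℝ, 0 < γ' → γ' ≤ γ → γ' ≤ γ ^ ((7 : ℝ) / 6) →
    ∃ n₀ : ℕ, ∀ n : ℕ, n₀ ≤ n →
    ∀ (V : Type) [Fintype V] [DecidableEq V] (G : SimpleGraph V) [DecidableRel G.Adj]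
      (D : ℕ), Fintype.card V = n → G.IsRegularOfDegree D → α * (n : ℝ) ≤ D →
    ∀ Y Z : Finset V, Disjoint Y Z →
      γ * (n : ℝ) ≤ Y.card →
      |(Y.card : ℝ) - Z.card| ≤ γ * n →
      ((crossCount G Y Zᶜ : ℕ) : ℝ) ≤ γ' * (n : ℝ) ^ 2 →
      ((crossCount G Y Zᶜ + crossCount G Z Yᶜ : ℕ) : ℝ) ≤ γ ^ ((1 : ℝ) / 3) * (n : ℝ) ^ 2 ∧
      γ ^ ((1 : ℝ) / 6) * (n : ℝ) ≤ Y.card ∧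
      γ ^ ((1 : ℝ) / 6) * (n : ℝ) ≤ Z.card := by
  exact stmt14'
end

section
/- Suppose (d_i)_{1≤i≤n} is a non-decreasing sequence of positive integers with n·d₁ ≥ (d₁ + d_n)²/4. Then (d_i) is bipartite graphic: there exists a bipartite graph G with vertex classes A = {a₁,…,a_n} and B = {b₁,…,b_n} such that deg(a_i) = deg(b_i) = d_i for all i. -/
open Finset

namespace Stmt18Aux

def Rsum (n : ℕ) (M : ℕ → ℕ → Bool) (i : ℕ) : ℕ :=
  ((Finset.range n).filter (fun j => M i j = true)).card

def Csum (n : ℕ) (M : ℕ → ℕ → Bool) (j : ℕ) : ℕ :=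
  ((Finset.range n).filter (fun i => M i j = true)).card

def swapM (M : ℕ → ℕ → Bool) (i k l : ℕ) : ℕ → ℕ → Bool :=
  fun a b => if a = i then (if b = k then false else if b = l then true else M a b) else M a b

lemma swap_facts (n : ℕ) (M : ℕ → ℕ → Bool) (i k l : ℕ)
    (hi : i < n) (hk : k < n) (hl : l < n) (hkl : k ≠ l)
    (hMk : M i k = true) (hMl : M i l = false) :
    (∀ a, a < n → Rsum n (swapM M i k l) a = Rsum n M a) ∧
    (Csum n (swapM M i k l) k + 1 = Csum n M k) ∧
    (Csum n (swapM M i k l) l = Csum n M l + 1) ∧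
    (∀ b, b ≠ k → b ≠ l → Csum n (swapM M i k l) b = Csum n M b) := by
  refine ⟨?_, ?_, ?_, ?_⟩
  · intro a ha
    by_cases hai : a = i
    · subst hai
      have hset : (Finset.range n).filter (fun j => swapM M a k l a j = true)
          = insert l (((Finset.range n).filter (fun j => M a j = true)).erase k) := by
        ext j
        by_cases hjk : j = k <;> by_cases hjl : j = l <;>
          simp [swapM, hjk, hjl, hkl, hMl, hMk, Finset.mem_erase, Finset.mem_range, hl] <;>
          tauto
      have hkmem : k ∈ (Finset.range n).filter (fun j => M a j = true) :=
        Finset.mem_filter.2 ⟨Finset.mem_range.2 hk, hMk⟩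
      have hlnot : l ∉ ((Finset.range n).filter (fun j => M a j = true)).erase k := by
        intro hmem
        have := (Finset.mem_filter.1 (Finset.mem_of_mem_erase hmem)).2
        simp [hMl] at this
      have hcard := Finset.card_erase_of_mem hkmem
      have hpos : 0 < ((Finset.range n).filter (fun j => M a j = true)).card :=
        Finset.card_pos.2 ⟨k, hkmem⟩
      unfold Rsum
      rw [hset, Finset.card_insert_of_notMem hlnot, hcard]
      omega
    · unfold Rsum
      congr 1
      exact Finset.filter_congr fun j _ => by simp [swapM, hai]
  · have hset : (Finset.range n).filter (fun a => swapM M i k l a k = true)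
        = ((Finset.range n).filter (fun a => M a k = true)).erase i := by
      ext a
      by_cases hai : a = i <;>
        simp [swapM, hai, Finset.mem_erase, Finset.mem_range, hkl] <;> tauto
    have himem : i ∈ (Finset.range n).filter (fun a => M a k = true) :=
      Finset.mem_filter.2 ⟨Finset.mem_range.2 hi, hMk⟩
    have hpos : 0 < ((Finset.range n).filter (fun a => M a k = true)).card :=
      Finset.card_pos.2 ⟨i, himem⟩
    unfold Csum
    rw [hset, Finset.card_erase_of_mem himem]
    omega
  · have hset : (Finset.range n).filter (fun a => swapM M i k l a l = true)
        = insert i ((Finset.range n).filter (fun a => M a l = true)) := by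
      ext a
      by_cases hai : a = i <;>
        simp [swapM, hai, Ne.symm hkl, Finset.mem_range, hi, hMl] <;> tauto
    have hinot : i ∉ (Finset.range n).filter (fun a => M a l = true) := by
      intro hmem
      have := (Finset.mem_filter.1 hmem).2
      simp [hMl] at this
    unfold Csum
    rw [hset, Finset.card_insert_of_notMem hinot]
  · intro b hbk hbl
    unfold Csum
    congr 1
    exact Finset.filter_congr fun a _ => by
      by_cases hai : a = i <;> simp [swapM, hai, hbk, hbl]

lemma csum_rel (n : ℕ) (M M' : ℕ → ℕ → Bool) (k l : ℕ) (hkl : k < l) (hln : l < n)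
    (h1 : Csum n M' k + 1 = Csum n M k)
    (h2 : Csum n M' l = Csum n M l + 1)
    (h3 : ∀ b, b ≠ k → b ≠ l → Csum n M' b = Csum n M b) :
    ∀ mm, (∑ j ∈ Finset.range mm, Csum n M' j) + (if k < mm then 1 else 0)
      = (∑ j ∈ Finset.range mm, Csum n M j) + (if l < mm then 1 else 0) := by
  intro mm
  induction mm with
  | zero => simp
  | succ m ih =>
    rw [Finset.sum_range_succ, Finset.sum_range_succ]
    by_cases hmk : m = k
    · rw [if_pos (by omega : k < m + 1), if_neg (by omega : ¬ l < m + 1)]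
      rw [if_neg (by omega : ¬ k < m), if_neg (by omega : ¬ l < m)] at ih
      have h7 : Csum n M' m + 1 = Csum n M m := by rw [hmk]; exact h1
      omega
    · by_cases hml : m = l
      · rw [if_pos (by omega : k < m + 1), if_pos (by omega : l < m + 1)]
        rw [if_pos (by omega : k < m), if_neg (by omega : ¬ l < m)] at ih
        have h7 : Csum n M' m = Csum n M m + 1 := by rw [hml]; exact h2
        omega
      · have h6 := h3 m hmk hml
        by_cases h4 : k < m
        · by_cases h5 : l < m
          · rw [if_pos h4, if_pos h5] at ih
            rw [if_pos (by omega : k < m+1), if_pos (by omega : l < m+1)]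
            omega
          · rw [if_pos h4, if_neg h5] at ih
            rw [if_pos (by omega : k < m+1), if_neg (by omega : ¬ l < m+1)]
            omega
        · by_cases h5 : l < m
          · exact absurd (by omega : k < m) h4
          · rw [if_neg h4, if_neg h5] at ih
            rw [if_neg (by omega : ¬ k < m+1), if_neg (by omega : ¬ l < m+1)]
            omega

set_option maxHeartbeats 1000000 in
lemma transfer (n : ℕ) (D : ℕ → ℕ) (hanti : ∀ i j, i ≤ j → D j ≤ D i) :
    ∀ Φ (M : ℕ → ℕ → Bool),
      (∀ i, i < n → Rsum n M i = D i) →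
      (∀ k, k ≤ n → ∑ j ∈ Finset.range k, D j ≤ ∑ j ∈ Finset.range k, Csum n M j) →
      (∑ j ∈ Finset.range n, Csum n M j = ∑ j ∈ Finset.range n, D j) →
      (∑ k ∈ Finset.range (n+1),
        (∑ j ∈ Finset.range k, Csum n M j - ∑ j ∈ Finset.range k, D j) ≤ Φ) →
      ∃ M', (∀ i, i < n → Rsum n M' i = D i) ∧ (∀ j, j < n → Csum n M' j = D j) := by
  intro Φ
  induction Φ with
  | zero =>
    intro M hrow hinv htot hmeas
    refine ⟨M, hrow, ?_⟩
    have hP : ∀ kk, kk ≤ n →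
        ∑ j ∈ Finset.range kk, Csum n M j = ∑ j ∈ Finset.range kk, D j := by
      intro kk hkk
      have h1 := hinv kk hkk
      have h2 : ∑ j ∈ Finset.range kk, Csum n M j - ∑ j ∈ Finset.range kk, D j = 0 := by
        have h3 : ∀ x ∈ Finset.range (n+1),
            (0:ℕ) ≤ ∑ j ∈ Finset.range x, Csum n M j - ∑ j ∈ Finset.range x, D j :=
          fun x _ => Nat.zero_le _
        have hmem : kk ∈ Finset.range (n+1) := Finset.mem_range.2 (by omega)
        have := Finset.single_le_sum h3 hmem
        omega
      omega
    intro j hj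
    have ha := hP j (by omega)
    have hb := hP (j+1) (by omega)
    rw [Finset.sum_range_succ, Finset.sum_range_succ] at hb
    omega
  | succ Φ ih =>
    intro M hrow hinv htot hmeas
    classical
    by_cases hdone : ∀ j, j < n → Csum n M j = D j
    · exact ⟨M, hrow, hdone⟩
    · push_neg at hdone
      obtain ⟨j₀, hj₀n, hj₀⟩ := hdone
      have hexk : ∃ j, j < n ∧ Csum n M j ≠ D j := ⟨j₀, hj₀n, hj₀⟩
      obtain ⟨k, hkn, hkne, hkmin⟩ : ∃ k, k < n ∧ Csum n M k ≠ D k ∧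
          ∀ j, j < k → Csum n M j = D j := by
        refine ⟨Nat.find hexk, (Nat.find_spec hexk).1, (Nat.find_spec hexk).2, ?_⟩
        intro j hj
        have h := Nat.find_min hexk hj
        push_neg at h
        by_cases hjn : j < n
        · exact h hjn
        · exact absurd (lt_trans hj (Nat.find_spec hexk).1) hjn
      have hDk : D k < Csum n M k := by
        have h1 := hinv (k+1) (by omega)
        rw [Finset.sum_range_succ, Finset.sum_range_succ] at h1
        have h2 : ∑ j ∈ Finset.range k, Csum n M j = ∑ j ∈ Finset.range k, D j :=
          Finset.sum_congr rfl fun j hj => hkmin j (Finset.mem_range.1 hj)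
        omega
      have hexl : ∃ j, j < n ∧ Csum n M j < D j := by
        by_contra hno
        push_neg at hno
        have : ∑ j ∈ Finset.range n, D j < ∑ j ∈ Finset.range n, Csum n M j :=
          Finset.sum_lt_sum (fun j hj => hno j (Finset.mem_range.1 hj))
            ⟨k, Finset.mem_range.2 hkn, hDk⟩
        omega
      obtain ⟨l, hln, hlt, hlmin⟩ : ∃ l, l < n ∧ Csum n M l < D l ∧
          ∀ j, j < l → D j ≤ Csum n M j := by
        refine ⟨Nat.find hexl, (Nat.find_spec hexl).1, (Nat.find_spec hexl).2, ?_⟩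
        intro j hj
        have h := Nat.find_min hexl hj
        push_neg at h
        exact h (lt_trans hj (Nat.find_spec hexl).1)
      have hkl : k < l := by
        rcases lt_trichotomy k l with h | h | h
        · exact h
        · rw [h] at hDk; omega
        · exact absurd (hkmin l h) (by omega)
      have hck : Csum n M l < Csum n M k := by
        have := hanti k l hkl.le
        omega
      have hexrow : ∃ i, i ∈ (Finset.range n).filter (fun a => M a k = true) ∧
          i ∉ (Finset.range n).filter (fun a => M a l = true) := by
        by_contra hno
        push_neg at hno
        have hsub : (Finset.range n).filter (fun a => M a k = true)
            ⊆ (Finset.range n).filter (fun a => M a l = true) := hno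
        have := Finset.card_le_card hsub
        unfold Csum at hck
        omega
      obtain ⟨i, hiA, hiB⟩ := hexrow
      have hin : i < n := Finset.mem_range.1 (Finset.mem_filter.1 hiA).1
      have hMik : M i k = true := (Finset.mem_filter.1 hiA).2
      have hMil : M i l = false := by
        cases hM : M i l
        · rfl
        · exact absurd (Finset.mem_filter.2 ⟨Finset.mem_range.2 hin, hM⟩) hiB
      obtain ⟨hR, hCk, hCl, hCo⟩ := swap_facts n M i k l hin hkn hln (by omega) hMik hMil
      have hrel := csum_rel n M (swapM M i k l) k l hkl hln hCk hCl hCo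
      have hstrict : ∀ mm, k < mm → mm ≤ l →
          ∑ j ∈ Finset.range mm, D j + 1 ≤ ∑ j ∈ Finset.range mm, Csum n M j := by
        intro mm h1 h2
        have h3 : ∑ j ∈ Finset.range mm, D j < ∑ j ∈ Finset.range mm, Csum n M j :=
          Finset.sum_lt_sum (fun j hj => hlmin j (by
            have := Finset.mem_range.1 hj; omega)) ⟨k, Finset.mem_range.2 h1, hDk⟩
        omega
      have hinv' : ∀ kk, kk ≤ n →
          ∑ j ∈ Finset.range kk, D j ≤ ∑ j ∈ Finset.range kk, Csum n (swapM M i k l) j := by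
        intro kk hkk
        have h := hrel kk
        by_cases h1 : k < kk
        · by_cases h2 : l < kk
          · rw [if_pos h1, if_pos h2] at h
            have := hinv kk hkk
            omega
          · rw [if_pos h1, if_neg h2] at h
            have := hstrict kk h1 (by omega)
            omega
        · rw [if_neg h1, if_neg (by omega : ¬ l < kk)] at h
          have := hinv kk hkk
          omega
      have htot' : ∑ j ∈ Finset.range n, Csum n (swapM M i k l) j
          = ∑ j ∈ Finset.range n, D j := by
        have h := hrel n
        rw [if_pos (by omega : k < n), if_pos hln] at h
        omega
      have hmeas' : ∑ kk ∈ Finset.range (n+1),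
          (∑ j ∈ Finset.range kk, Csum n (swapM M i k l) j - ∑ j ∈ Finset.range kk, D j)
            ≤ Φ := by
        have hlt : ∑ kk ∈ Finset.range (n+1),
            (∑ j ∈ Finset.range kk, Csum n (swapM M i k l) j - ∑ j ∈ Finset.range kk, D j)
            < ∑ kk ∈ Finset.range (n+1),
            (∑ j ∈ Finset.range kk, Csum n M j - ∑ j ∈ Finset.range kk, D j) := by
          refine Finset.sum_lt_sum (fun kk _ => ?_) ⟨k+1, Finset.mem_range.2 (by omega), ?_⟩
          · have h := hrel kk
            by_cases h1 : k < kk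
            · by_cases h2 : l < kk
              · rw [if_pos h1, if_pos h2] at h; omega
              · rw [if_pos h1, if_neg h2] at h; omega
            · rw [if_neg h1, if_neg (by omega : ¬ l < kk)] at h; omega
          · have h := hrel (k+1)
            rw [if_pos (by omega : k < k+1), if_neg (by omega : ¬ l < k+1)] at h
            have := hstrict (k+1) (by omega) (by omega)
            omega
        omega
      exact ih (swapM M i k l) (fun a ha => (hR a ha).trans (hrow a ha)) hinv' htot' hmeas'

lemma sum_range_split (f : ℕ → ℕ) {m n : ℕ} (h : m ≤ n) :
    ∑ i ∈ Finset.range n, f i = ∑ i ∈ Finset.range m, f i + ∑ i ∈ Finset.Ico m n, f i := by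
  rw [Finset.range_eq_Ico, Finset.range_eq_Ico, Finset.sum_Ico_consecutive _ (Nat.zero_le m) h]

lemma sum_conj (n k : ℕ) (D : ℕ → ℕ) :
    ∑ j ∈ Finset.range k, ((Finset.range n).filter (fun i => j < D i)).card
      = ∑ i ∈ Finset.range n, min (D i) k := by
  have h1 : ∀ j, ((Finset.range n).filter (fun i => j < D i)).card
      = ∑ i ∈ Finset.range n, if j < D i then 1 else 0 := by
    intro j; rw [Finset.card_filter]
  simp_rw [h1]
  rw [Finset.sum_comm]
  refine Finset.sum_congr rfl fun i _ => ?_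
  rw [← Finset.card_filter]
  have : (Finset.range k).filter (fun j => j < D i) = Finset.range (min (D i) k) := by
    ext j; simp [Finset.mem_filter, Finset.mem_range]; omega
  rw [this, Finset.card_range]

set_option maxHeartbeats 1000000 in
lemma dominance (n : ℕ) (hn : 0 < n) (D : ℕ → ℕ)
    (hanti : ∀ i j, i ≤ j → D j ≤ D i)
    (s t : ℕ) (hs : ∀ i, s ≤ D i) (ht : ∀ i, D i ≤ t)
    (hspos : 0 < s) (hlow : D (n - 1) = s)
    (hcond : (s + t)^2 ≤ 4 * (n * s))
    (k : ℕ) (hk : k ≤ n) :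
    ∑ j ∈ Finset.range k, D j ≤ ∑ i ∈ Finset.range n, min (D i) k := by
  have hst : s ≤ t := by have := hs 0; have := ht 0; omega
  have htn : t ≤ n := by
    have h4 : 4 * (s * t) ≤ (s + t)^2 := by nlinarith [sq_nonneg ((s:ℤ) - t)]
    have h5 : s * t ≤ n * s := by omega
    have h6 : t * s ≤ n * s := by rw [mul_comm]; exact h5
    exact Nat.le_of_mul_le_mul_right h6 hspos
  have key : k * s + k * t ≤ k^2 + n * s := by
    nlinarith [sq_nonneg ((s:ℤ) + t - 2*k), hcond]
  rcases le_or_gt t k with hkt | hkt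
  · have hmin : ∀ i ∈ Finset.range n, min (D i) k = D i := fun i _ => by
      have := ht i; omega
    rw [Finset.sum_congr rfl hmin]
    exact Finset.sum_le_sum_of_subset (Finset.range_subset_range.2 hk)
  rcases lt_or_ge k s with hks | hks
  · have hmin : ∀ i ∈ Finset.range n, min (D i) k = k := fun i _ => by
      have := hs i; omega
    rw [Finset.sum_congr rfl hmin, Finset.sum_const, Finset.card_range, smul_eq_mul]
    calc ∑ j ∈ Finset.range k, D j ≤ ∑ _j ∈ Finset.range k, t :=
          Finset.sum_le_sum fun j _ => ht j
      _ = k * t := by rw [Finset.sum_const, Finset.card_range, smul_eq_mul]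
      _ ≤ n * k := by nlinarith
  · -- s ≤ k < t
    obtain ⟨m, hm⟩ : ∃ m, m = sInf {i | D i ≤ k} := ⟨_, rfl⟩
    have hne : {i | D i ≤ k}.Nonempty := ⟨n - 1, by simp only [Set.mem_setOf_eq, hlow]; omega⟩
    have hmem : D m ≤ k := hm ▸ Nat.sInf_mem hne
    have hm2 : ∀ i, m ≤ i → D i ≤ k := fun i hi => le_trans (hanti m i hi) hmem
    have hm1 : ∀ i, i < m → k < D i := by
      intro i hi
      by_contra h
      have hik : i ∈ {i | D i ≤ k} := Nat.le_of_not_lt h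
      have : m ≤ i := hm ▸ Nat.sInf_le hik
      omega
    have hmn : m ≤ n - 1 := hm ▸ Nat.sInf_le (show n-1 ∈ {i | D i ≤ k} by
      simp only [Set.mem_setOf_eq, hlow]; omega)
    have hmn' : m ≤ n := le_trans hmn (Nat.sub_le n 1)
    rcases le_or_gt m k with hmk | hmk
    · have A1 : ∑ j ∈ Finset.range k, D j + (n - k) * s ≤ ∑ i ∈ Finset.range n, D i := by
        have h2 : (n - k) * s ≤ ∑ i ∈ Finset.Ico k n, D i := by
          calc (n - k) * s = ∑ _i ∈ Finset.Ico k n, s := by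
                rw [Finset.sum_const, Nat.card_Ico, smul_eq_mul]
            _ ≤ ∑ i ∈ Finset.Ico k n, D i := Finset.sum_le_sum fun i _ => hs i
        have := sum_range_split D hk
        omega
      have A2 : ∑ i ∈ Finset.range n, D i
          ≤ (∑ i ∈ Finset.range n, min (D i) k) + m * (t - k) := by
        have hsum : ∑ i ∈ Finset.range n, D i
            = (∑ i ∈ Finset.range n, min (D i) k) + ∑ i ∈ Finset.range n, (D i - k) := by
          rw [← Finset.sum_add_distrib]
          exact Finset.sum_congr rfl fun i _ => by omega
        have hbound : ∑ i ∈ Finset.range n, (D i - k) ≤ m * (t - k) := by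
          have hsplit : ∑ i ∈ Finset.range n, (D i - k)
              = ∑ i ∈ Finset.range m, (D i - k) + ∑ i ∈ Finset.Ico m n, (D i - k) :=
            sum_range_split _ hmn'
          have hz : ∑ i ∈ Finset.Ico m n, (D i - k) = 0 := by
            refine Finset.sum_eq_zero fun i hi => ?_
            have := hm2 i (Finset.mem_Ico.1 hi).1; omega
          have hb : ∑ i ∈ Finset.range m, (D i - k) ≤ m * (t - k) := by
            calc ∑ i ∈ Finset.range m, (D i - k) ≤ ∑ _i ∈ Finset.range m, (t - k) :=
                  Finset.sum_le_sum fun i _ => by have := ht i; omega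
              _ = m * (t - k) := by rw [Finset.sum_const, Finset.card_range, smul_eq_mul]
          omega
        omega
      have A3 : m * (t - k) ≤ (n - k) * s := by
        have keyz : (k:ℤ)*s + (k:ℤ)*t ≤ (k:ℤ)^2 + (n:ℤ)*s := by exact_mod_cast key
        have hmkz : (m:ℤ) ≤ (k:ℤ) := by exact_mod_cast hmk
        have htk : (k:ℤ) ≤ (t:ℤ) := by exact_mod_cast hkt.le
        have hsk : (s:ℤ) ≤ (k:ℤ) := by exact_mod_cast hks
        have hkn : (k:ℤ) ≤ (n:ℤ) := by exact_mod_cast hk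
        zify [le_of_lt hkt, hk]
        nlinarith [mul_nonneg (by linarith : (0:ℤ) ≤ (k:ℤ) - m)
          (by linarith : (0:ℤ) ≤ (t:ℤ) - k)]
      omega
    · have B1 : ∑ j ∈ Finset.range k, D j ≤ k * t := by
        calc ∑ j ∈ Finset.range k, D j ≤ ∑ _j ∈ Finset.range k, t :=
              Finset.sum_le_sum fun j _ => ht j
          _ = k * t := by rw [Finset.sum_const, Finset.card_range, smul_eq_mul]
      have B2 : m * k + (n - m) * s ≤ ∑ i ∈ Finset.range n, min (D i) k := by
        have hsplit : ∑ i ∈ Finset.range n, min (D i) k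
            = ∑ i ∈ Finset.range m, min (D i) k + ∑ i ∈ Finset.Ico m n, min (D i) k :=
          sum_range_split _ hmn'
        have h1 : ∑ i ∈ Finset.range m, min (D i) k = m * k := by
          rw [Finset.sum_congr rfl (fun i hi => show min (D i) k = k by
            have := hm1 i (Finset.mem_range.1 hi); omega),
            Finset.sum_const, Finset.card_range, smul_eq_mul]
        have h2 : (n - m) * s ≤ ∑ i ∈ Finset.Ico m n, min (D i) k := by
          calc (n - m) * s = ∑ _i ∈ Finset.Ico m n, s := by
                rw [Finset.sum_const, Nat.card_Ico, smul_eq_mul]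
            _ ≤ ∑ i ∈ Finset.Ico m n, min (D i) k :=
              Finset.sum_le_sum fun i _ => by have := hs i; omega
        omega
      have B3 : k * t ≤ m * k + (n - m) * s := by
        have hB : k * t + m * s ≤ m * k + n * s := by
          have hZ : (↑(k * t + m * s) : ℤ) ≤ ↑(m * k + n * s) := by
            push_cast
            have keyz : (k:ℤ)*s + (k:ℤ)*t ≤ (k:ℤ)^2 + (n:ℤ)*s := by exact_mod_cast key
            have hmkz : (k:ℤ) ≤ (m:ℤ) := by exact_mod_cast hmk.le
            have hsk : (s:ℤ) ≤ (k:ℤ) := by exact_mod_cast hks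
            nlinarith [mul_nonneg (by linarith : (0:ℤ) ≤ (m:ℤ) - k)
              (by linarith : (0:ℤ) ≤ (k:ℤ) - s)]
          exact_mod_cast hZ
        have hC : (n - m) * s + m * s = n * s := by
          rw [Nat.sub_mul]
          have : m * s ≤ n * s := Nat.mul_le_mul_right s hmn'
          omega
        omega
      omega



def bip (n : ℕ) (N : ℕ → ℕ → Bool) : SimpleGraph (Fin n ⊕ Fin n) where
  Adj x y := match x, y with
    | Sum.inl i, Sum.inr j => N i.1 j.1 = true
    | Sum.inr i, Sum.inl j => N j.1 i.1 = true
    | _, _ => False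
  symm := ⟨by rintro (i | i) (j | j) h <;> exact h⟩
  loopless := ⟨by rintro (i | i) h <;> exact h⟩

lemma bip_adj_ll (n : ℕ) (N : ℕ → ℕ → Bool) (i j : Fin n) :
    ¬ (bip n N).Adj (Sum.inl i) (Sum.inl j) ∧ ¬ (bip n N).Adj (Sum.inr i) (Sum.inr j) :=
  ⟨fun h => h, fun h => h⟩

lemma bip_ns_inl (n : ℕ) (N : ℕ → ℕ → Bool) (i : Fin n) :
    ((bip n N).neighborSet (Sum.inl i)).ncard = Rsum n N i.1 := by
  have h1 : ((bip n N).neighborSet (Sum.inl i) : Set (Fin n ⊕ Fin n))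
      = ↑((Finset.univ.filter (fun j : Fin n => N i.1 j.1 = true)).image
          (Sum.inr : Fin n → Fin n ⊕ Fin n)) := by
    ext y
    cases y with
    | inl j =>
      simp only [SimpleGraph.mem_neighborSet, Finset.coe_image, Set.mem_image,
        Finset.mem_coe, Finset.mem_filter, Finset.mem_univ, true_and]
      constructor
      · intro h; exact h.elim
      · rintro ⟨a, _, ha⟩; exact absurd ha (by simp)
    | inr j =>
      simp only [SimpleGraph.mem_neighborSet, Finset.coe_image, Set.mem_image,
        Finset.mem_coe, Finset.mem_filter, Finset.mem_univ, true_and]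
      constructor
      · intro h; exact ⟨j, h, rfl⟩
      · rintro ⟨a, ha, haj⟩
        have : a = j := by simpa using haj
        subst this; exact ha
  rw [h1, Set.ncard_coe_finset, Finset.card_image_of_injective _ Sum.inr_injective]
  unfold Rsum
  rw [Finset.card_filter, Finset.card_filter]
  exact Fin.sum_univ_eq_sum_range (fun j => if N i.1 j = true then 1 else 0) n

lemma bip_ns_inr (n : ℕ) (N : ℕ → ℕ → Bool) (i : Fin n) :
    ((bip n N).neighborSet (Sum.inr i)).ncard = Csum n N i.1 := by
  have h1 : ((bip n N).neighborSet (Sum.inr i) : Set (Fin n ⊕ Fin n))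
      = ↑((Finset.univ.filter (fun j : Fin n => N j.1 i.1 = true)).image
          (Sum.inl : Fin n → Fin n ⊕ Fin n)) := by
    ext y
    cases y with
    | inr j =>
      simp only [SimpleGraph.mem_neighborSet, Finset.coe_image, Set.mem_image,
        Finset.mem_coe, Finset.mem_filter, Finset.mem_univ, true_and]
      constructor
      · intro h; exact h.elim
      · rintro ⟨a, _, ha⟩; exact absurd ha (by simp)
    | inl j =>
      simp only [SimpleGraph.mem_neighborSet, Finset.coe_image, Set.mem_image,
        Finset.mem_coe, Finset.mem_filter, Finset.mem_univ, true_and]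
      constructor
      · intro h; exact ⟨j, h, rfl⟩
      · rintro ⟨a, ha, haj⟩
        have : a = j := by simpa using haj
        subst this; exact ha
  rw [h1, Set.ncard_coe_finset, Finset.card_image_of_injective _ Sum.inl_injective]
  unfold Csum
  rw [Finset.card_filter, Finset.card_filter]
  exact Fin.sum_univ_eq_sum_range (fun j => if N j i.1 = true then 1 else 0) n


end Stmt18Aux

open Stmt18Aux

set_option maxHeartbeats 1000000 in
/-- If `(d_i)_{1 ≤ i ≤ n}` is a non-decreasing sequence of positive integers with
`n·d₁ ≥ (d₁ + d_n)²/4`, then it is bipartite graphic: there is a bipartite graph with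
vertex classes `A = Fin n` (left) and `B = Fin n` (right) in which the `i`-th vertex
of each class has degree `d_i`. -/
theorem stmt18 (n : ℕ) (hn : 0 < n) (d : Fin n → ℕ)
    (hmono : Monotone d) (hpos : ∀ i, 0 < d i)
    (hcond : (((d ⟨0, hn⟩ : ℝ) + d ⟨n - 1, by omega⟩) ^ 2) / 4
        ≤ (n : ℝ) * d ⟨0, hn⟩) :
    ∃ G : SimpleGraph (Fin n ⊕ Fin n),
      (∀ i j : Fin n, ¬ G.Adj (Sum.inl i) (Sum.inl j) ∧ ¬ G.Adj (Sum.inr i) (Sum.inr j)) ∧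
      (∀ i : Fin n, (G.neighborSet (Sum.inl i)).ncard = d i ∧
        (G.neighborSet (Sum.inr i)).ncard = d i) := by
  set s : ℕ := d ⟨0, hn⟩ with hs_def
  set t : ℕ := d ⟨n - 1, by omega⟩ with ht_def
  set D : ℕ → ℕ := fun i => if h : i < n then d ⟨n - 1 - i, by omega⟩ else s with hD_def
  have hDval : ∀ i, i < n → D i = d ⟨n - 1 - i, by omega⟩ := by
    intro i hi; simp only [hD_def, dif_pos hi]
  have hanti : ∀ i j, i ≤ j → D j ≤ D i := by
    intro i j hij
    by_cases hj : j < n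
    · have hi : i < n := lt_of_le_of_lt hij hj
      rw [hDval i hi, hDval j hj]
      exact hmono (by simp [Fin.le_def]; omega)
    · by_cases hi : i < n
      · rw [hDval i hi]
        simp only [hD_def, dif_neg hj]
        exact hmono (by simp [Fin.le_def])
      · simp only [hD_def, dif_neg hi, dif_neg hj, le_refl]
  have hsD : ∀ i, s ≤ D i := by
    intro i
    by_cases hi : i < n
    · rw [hDval i hi]; exact hmono (by simp [Fin.le_def])
    · simp only [hD_def, dif_neg hi, le_refl]
  have htD : ∀ i, D i ≤ t := by
    intro i
    by_cases hi : i < n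
    · rw [hDval i hi]; exact hmono (by simp [Fin.le_def])
    · simp only [hD_def, dif_neg hi]; exact hmono (by simp [Fin.le_def])
  have hlow : D (n - 1) = s := by
    rw [hDval (n-1) (by omega)]
    congr 1
    exact Fin.ext (by simp)
  have hspos : 0 < s := hpos _
  have hcond' : (s + t)^2 ≤ 4 * (n * s) := by
    have h1 : ((s:ℝ) + t)^2 ≤ 4 * (n * s) := by
      rw [div_le_iff₀ (by norm_num : (0:ℝ) < 4)] at hcond
      calc ((s:ℝ) + t)^2 ≤ (n:ℝ) * s * 4 := hcond
        _ = 4 * (n * s) := by ring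
    have h2 : (((s + t)^2 : ℕ) : ℝ) ≤ ((4 * (n * s) : ℕ) : ℝ) := by push_cast; linarith
    exact_mod_cast h2
  have hst : s ≤ t := hmono (by simp [Fin.le_def])
  have htn : t ≤ n := by
    have h4 : 4 * (s * t) ≤ (s + t)^2 := by nlinarith [sq_nonneg ((s:ℤ) - t)]
    have h5 : s * t ≤ n * s := by omega
    have h6 : t * s ≤ n * s := by rw [mul_comm]; exact h5
    exact Nat.le_of_mul_le_mul_right h6 hspos
  have hDn : ∀ i, D i ≤ n := fun i => le_trans (htD i) htn
  -- initial matrix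
  set M₀ : ℕ → ℕ → Bool := fun i j => decide (j < D i) with hM₀_def
  have hrow₀ : ∀ i, i < n → Rsum n M₀ i = D i := by
    intro i hi
    unfold Rsum
    have : (Finset.range n).filter (fun j => M₀ i j = true) = Finset.range (D i) := by
      ext j
      simp only [hM₀_def, Finset.mem_filter, Finset.mem_range, decide_eq_true_eq]
      have := hDn i
      omega
    rw [this, Finset.card_range]
  have hcol₀ : ∀ j, Csum n M₀ j = ((Finset.range n).filter (fun i => j < D i)).card := by
    intro j
    unfold Csum
    congr 1
    ext i
    simp [hM₀_def]
  have hsumcol : ∀ k, ∑ j ∈ Finset.range k, Csum n M₀ j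
      = ∑ i ∈ Finset.range n, min (D i) k := by
    intro k
    rw [Finset.sum_congr rfl (fun j _ => hcol₀ j)]
    exact sum_conj n k D
  have hinv₀ : ∀ k, k ≤ n → ∑ j ∈ Finset.range k, D j ≤ ∑ j ∈ Finset.range k, Csum n M₀ j := by
    intro k hk
    rw [hsumcol k]
    exact dominance n hn D hanti s t hsD htD hspos hlow hcond' k hk
  have htot₀ : ∑ j ∈ Finset.range n, Csum n M₀ j = ∑ j ∈ Finset.range n, D j := by
    rw [hsumcol n]
    exact Finset.sum_congr rfl fun i _ => by have := hDn i; omega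
  obtain ⟨M, hrowM, hcolM⟩ := transfer n D hanti
    (∑ k ∈ Finset.range (n+1),
      (∑ j ∈ Finset.range k, Csum n M₀ j - ∑ j ∈ Finset.range k, D j))
    M₀ hrow₀ hinv₀ htot₀ (le_refl _)
  -- reverse indices
  set N : ℕ → ℕ → Bool := fun i j => M (n - 1 - i) (n - 1 - j) with hN_def
  have hrev : ∀ (p : ℕ → Bool),
      ((Finset.range n).filter (fun j => p (n - 1 - j) = true)).card
        = ((Finset.range n).filter (fun j => p j = true)).card := by
    intro p
    refine Finset.card_bij' (fun j _ => n - 1 - j) (fun j _ => n - 1 - j) ?_ ?_ ?_ ?_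
    · intro a ha
      simp only [Finset.mem_filter, Finset.mem_range] at ha ⊢
      exact ⟨by omega, ha.2⟩
    · intro a ha
      simp only [Finset.mem_filter, Finset.mem_range] at ha ⊢
      refine ⟨by omega, ?_⟩
      have : n - 1 - (n - 1 - a) = a := by omega
      rw [this]
      exact ha.2
    · intro a ha
      simp only [Finset.mem_filter, Finset.mem_range] at ha
      show n - 1 - (n - 1 - a) = a
      omega
    · intro a ha
      simp only [Finset.mem_filter, Finset.mem_range] at ha
      show n - 1 - (n - 1 - a) = a
      omega
  have hrowN : ∀ i : Fin n, Rsum n N i.1 = d i := by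
    intro i
    have h1 : Rsum n N i.1 = Rsum n M (n - 1 - i.1) := by
      unfold Rsum
      exact hrev (fun j => M (n - 1 - i.1) j)
    rw [h1, hrowM _ (by omega), hDval _ (by omega)]
    congr 1
    exact Fin.ext (by simp; omega)
  have hcolN : ∀ j : Fin n, Csum n N j.1 = d j := by
    intro j
    have h1 : Csum n N j.1 = Csum n M (n - 1 - j.1) := by
      unfold Csum
      exact hrev (fun i => M i (n - 1 - j.1))
    rw [h1, hcolM _ (by omega), hDval _ (by omega)]
    congr 1
    exact Fin.ext (by simp; omega)
  -- build the graph
  refine ⟨bip n N, fun i j => bip_adj_ll n N i j, fun i => ?_⟩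
  rw [bip_ns_inl n N i, bip_ns_inr n N i, hrowN i, hcolN i]
  exact ⟨rfl, rfl⟩
end
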